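/- arXiv:2109.00409 — 9 statements merged into one kernel-verified Lean document; each statement's English description precedes it below -/
import Mathlib

section
/- Let G ∈ 𝒢_n^m with strong-component vertex set S, and let 0 ≤ α < 1. Let M_S be the principal submatrix of A_α(G) with rows and columns indexed by S (its diagonal entries are α·d⁺(v), where d⁺ is the outdegree in all of G). Then the characteristic polynomial of A_α(G) factors as charpoly(A_α(G)) = charpoly(M_S) · ∏_{v∈V∖S} (X − α·d⁺(v)). In particular, for each vertex v not in S, α·d⁺(v) is an eigenvalue of A_α(G), and the remaining m eigenvalues of A_α(G) are exactly the eigenvalues of M_S. -/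
open Polynomial Matrix Finset

/-- The outdegree of a vertex `v` of the digraph with adjacency matrix `A`. -/
noncomputable def outdeg {V : Type*} [Fintype V] (A : Matrix V V ℝ) (v : V) : ℝ := ∑ w, A v w

/-- The `A_α`-matrix `α·D⁺ + (1-α)·A` of a digraph with adjacency matrix `A`. -/
noncomputable def Aalpha {V : Type*} [Fintype V] [DecidableEq V] (α : ℝ) (A : Matrix V V ℝ) :
    Matrix V V ℝ :=
  α • Matrix.diagonal (outdeg A) + (1 - α) • A

/-- The spectral radius of a real square matrix: the maximum modulus of its complex
eigenvalues (roots of the characteristic polynomial over `ℂ`). -/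
noncomputable def specRad {V : Type*} [Fintype V] [DecidableEq V] (M : Matrix V V ℝ) : ℝ :=
  sSup {x : ℝ | ∃ z : ℂ, (M.map ((↑) : ℝ → ℂ)).charpoly.IsRoot z ∧ ‖z‖ = x}

/-- The `A_α` energy of a digraph: the sum of the squares of the eigenvalues of its
`A_α`-matrix, equivalently `trace (A_α(G)²)`. -/
noncomputable def Ealpha {V : Type*} [Fintype V] [DecidableEq V] (α : ℝ) (A : Matrix V V ℝ) : ℝ :=
  Matrix.trace (Aalpha α A * Aalpha α A)

/-- The outdegree of `s` within the vertex set `S` (the within-`S` outdegree `d*(s)`). -/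
noncomputable def dStar {V : Type*} [Fintype V] (A : Matrix V V ℝ) (S : Finset V) (s : V) : ℝ :=
  ∑ v ∈ S, A s v

/-- The size `n_s` of the fiber `r⁻¹(s)`. -/
def fibCard {V : Type*} [Fintype V] [DecidableEq V] (r : V → V) (s : V) : ℕ :=
  (Finset.univ.filter (fun v => r v = s)).card

/-- The underlying undirected graph of the induced subdigraph on the fiber `r⁻¹(s)`. -/
def fiberGraph {V : Type*} (A : Matrix V V ℝ) (r : V → V) (s : V) :
    SimpleGraph {v : V // r v = s} where
  Adj u w := u ≠ w ∧ (A u.1 w.1 = 1 ∨ A w.1 u.1 = 1)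
  symm := ⟨fun _ _ h => ⟨h.1.symm, h.2.symm⟩⟩
  loopless := ⟨fun _ h => h.1 rfl⟩

/-- The principal submatrix of `A` with rows and columns indexed by `S`. -/
def subm {V : Type*} (A : Matrix V V ℝ) (S : Finset V) :
    Matrix {v : V // v ∈ S} {v : V // v ∈ S} ℝ :=
  A.submatrix (fun x => x.1) (fun x => x.1)

/-- `c₂(G*) = trace(A*²)`, the number of closed walks of length 2 in the strong component. -/
noncomputable def c2star {V : Type*} [Fintype V] [DecidableEq V] (A : Matrix V V ℝ)
    (S : Finset V) : ℝ :=
  Matrix.trace (subm A S * subm A S)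

/-- Membership in the class `𝒢_n^m`: `A` is the adjacency matrix of a digraph of order `n`
with a unique strong component on the vertex set `S` of order `m`, with a directed tree
(the fiber `r⁻¹(s)`) hung on each vertex `s ∈ S`. -/
structure IsGnm {V : Type*} [Fintype V] [DecidableEq V] (A : Matrix V V ℝ) (S : Finset V)
    (r : V → V) (n m : ℕ) : Prop where
  zero_one : ∀ u v, A u v = 0 ∨ A u v = 1
  loopless : ∀ v, A v v = 0
  card_V : Fintype.card V = n
  card_S : S.card = m
  two_le_m : 2 ≤ m
  m_lt_n : m < n
  strong : ∀ u ∈ S, ∀ v ∈ S, Relation.ReflTransGen (fun a b => a ∈ S ∧ b ∈ S ∧ A a b = 1) u v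
  r_mem : ∀ v, r v ∈ S
  r_fix : ∀ s ∈ S, r s = s
  arc_cases : ∀ u v, A u v = 1 → (u ∈ S ∧ v ∈ S) ∨ r u = r v
  fiber_no_symm : ∀ u v, r u = r v → A u v = 1 → A v u = 0
  fiber_tree : ∀ s ∈ S, (fiberGraph A r s).IsTree

/-- Every hung tree is an in-tree with root at its vertex of `S`: inside each fiber the
root has outdegree `0` and every other vertex has outdegree `1`. -/
def InTrees {V : Type*} [Fintype V] [DecidableEq V] (A : Matrix V V ℝ) (S : Finset V)
    (r : V → V) : Prop :=
  (∀ v, v ∉ S → (∑ w ∈ Finset.univ.filter (fun w => r w = r v), A v w) = 1) ∧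
  (∀ s ∈ S, (∑ w ∈ Finset.univ.filter (fun w => r w = s), A s w) = 0)

/-- All hung trees are trivial except the one at `v`, which is an out-star with centre `v`. -/
def OutStarAt {V : Type*} [Fintype V] [DecidableEq V] (A : Matrix V V ℝ) (S : Finset V)
    (r : V → V) (v : V) : Prop :=
  (∀ s ∈ S, s ≠ v → fibCard r s = 1) ∧ (∀ u w, r u = v → A u w = 1 → u = v)


section Aux

open SimpleGraph in
private lemma walk_of_chain {V : Type*} (A : Matrix V V ℝ) (r : V → V) (s : V) :
    ∀ (l : List V) (a b : V) (ha : r a = s) (hb : r b = s),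
      List.Chain (fun p q => A p q = 1 ∧ r p = r q ∧ p ≠ q) a (l ++ [b]) →
      (∀ x ∈ l, r x = s) →
      ∃ W : (fiberGraph A r s).Walk ⟨a, ha⟩ ⟨b, hb⟩,
        ∀ e ∈ W.edges, ∃ p q : V, (A p q = 1 ∧ r p = r q ∧ p ≠ q) ∧
          (∃ l₁ l₂ : List V, a :: (l ++ [b]) = l₁ ++ p :: q :: l₂) ∧
          Sym2.map Subtype.val e = s(p, q) := by
  intro l
  induction l with
  | nil =>
    intro a b ha hb hch _
    rw [List.nil_append, List.Chain, List.chain_cons] at hch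
    obtain ⟨⟨h1, h2, h3⟩, -⟩ := hch
    have hadj : (fiberGraph A r s).Adj ⟨a, ha⟩ ⟨b, hb⟩ :=
      ⟨fun h => h3 (congrArg Subtype.val h), Or.inl h1⟩
    refine ⟨Walk.cons hadj Walk.nil, ?_⟩
    intro e he
    simp only [Walk.edges_cons, Walk.edges_nil, List.mem_singleton] at he
    subst he
    exact ⟨a, b, ⟨h1, h2, h3⟩, ⟨[], [], rfl⟩, by simp⟩
  | cons x t ih =>
    intro a b ha hb hch hmem
    rw [List.cons_append, List.Chain, List.chain_cons] at hch
    obtain ⟨⟨h1, h2, h3⟩, hch'⟩ := hch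
    have hx : r x = s := hmem x (List.mem_cons_self (a := x) (l := t))
    obtain ⟨W', hW'⟩ := ih x b hx hb hch' (fun y hy => hmem y (List.mem_cons_of_mem _ hy))
    have hadj : (fiberGraph A r s).Adj ⟨a, ha⟩ ⟨x, hx⟩ :=
      ⟨fun h => h3 (congrArg Subtype.val h), Or.inl h1⟩
    refine ⟨Walk.cons hadj W', ?_⟩
    intro e he
    rw [Walk.edges_cons, List.mem_cons] at he
    rcases he with rfl | he
    · exact ⟨a, x, ⟨h1, h2, h3⟩, ⟨[], t ++ [b], rfl⟩, by simp⟩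
    · obtain ⟨p, q, hpq, ⟨l₁, l₂, hdec⟩, hsym⟩ := hW' e he
      exact ⟨p, q, hpq, ⟨a :: l₁, l₂, by rw [List.cons_append, hdec]; rfl⟩, hsym⟩

private lemma chain_r_const {V : Type*} (A : Matrix V V ℝ) (r : V → V) :
    ∀ (l : List V) (a : V), List.Chain (fun p q => A p q = 1 ∧ r p = r q) a l →
      ∀ x ∈ l, r x = r a := by
  intro l
  induction l with
  | nil => intro a _ x hx; cases hx
  | cons y t ih =>
    intro a h x hx
    rw [List.Chain, List.chain_cons] at h
    rcases List.mem_cons.1 hx with rfl | hx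
    · exact h.1.2.symm
    · exact (ih y h.2 x hx).trans h.1.2.symm

private lemma no_closed_chain {V : Type*} [Fintype V] [DecidableEq V]
    {A : Matrix V V ℝ} {S : Finset V} {r : V → V} {n m : ℕ} (hG : IsGnm A S r n m) :
    ∀ (k : ℕ) (v : V) (l : List V), l.length = k →
      List.Chain (fun p q => A p q = 1 ∧ r p = r q) v (l ++ [v]) → False := by
  intro k
  induction k using Nat.strong_induction_on with
  | _ k IH =>
    intro v l hlen hch
    have hne : ∀ p q : V, A p q = 1 → p ≠ q := by
      intro p q hpq h; subst h; rw [hG.loopless p] at hpq; norm_num at hpq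
    cases l with
    | nil =>
      rw [List.nil_append, List.Chain, List.chain_cons] at hch
      exact hne v v hch.1.1 rfl
    | cons w l' =>
      rw [List.cons_append, List.Chain, List.chain_cons] at hch
      obtain ⟨⟨h1, h2⟩, hch'⟩ := hch
      have hvw : v ≠ w := hne v w h1
      have hws : r w = r v := h2.symm
      have hch'' : List.Chain (fun p q => A p q = 1 ∧ r p = r q ∧ p ≠ q) w (l' ++ [v]) :=
        List.Chain.imp (fun p q hpq => ⟨hpq.1, hpq.2, hne p q hpq.1⟩) hch'
      have hmem : ∀ x ∈ l', r x = r v := by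
        intro x hx
        exact (chain_r_const A r _ w hch' x (List.mem_append_left _ hx)).trans hws
      obtain ⟨W, hW⟩ := walk_of_chain A r (r v) l' w v hws rfl hch'' hmem
      have htree := hG.fiber_tree (r v) (hG.r_mem v)
      have hadj : (fiberGraph A r (r v)).Adj ⟨w, hws⟩ ⟨v, rfl⟩ :=
        ⟨fun h => hvw (congrArg Subtype.val h).symm, Or.inr h1⟩
      have huniq := htree.IsAcyclic.path_unique W.toPath (SimpleGraph.Path.singleton hadj)
      have hedge : s((⟨w, hws⟩ : {x // r x = r v}), ⟨v, rfl⟩) ∈ W.edges := by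
        apply SimpleGraph.Walk.edges_toPath_subset
        rw [huniq]
        simp [SimpleGraph.Path.singleton]
      obtain ⟨p, q, ⟨hA1, hr1, hne1⟩, ⟨l₁, l₂, hdec⟩, hsym⟩ := hW _ hedge
      simp only [Sym2.map_pair_eq, Sym2.eq_iff] at hsym
      rcases hsym with ⟨hwp, hvq⟩ | ⟨hwq, hvp⟩
      · -- p = w, q = v : arc w → v together with arc v → w, a symmetric pair
        subst hwp; subst hvq
        have := hG.fiber_no_symm v w h2 h1
        rw [this] at hA1; norm_num at hA1
      · -- p = v, q = w : the pair (v, w) occurs in the interior of the chain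
        subst hwq; subst hvp
        cases l₁ with
        | nil =>
          rw [List.nil_append] at hdec
          injection hdec with h _
          exact hvw h.symm
        | cons c l₁' =>
          rw [List.cons_append] at hdec
          injection hdec with hcw htail
          rcases List.eq_nil_or_concat' l₂ with rfl | ⟨l₂', z, rfl⟩
          · -- l₂ = [] : the chain would end with w instead of v
            have h2' : l' ++ [v] = (l₁' ++ [v]) ++ [w] := by
              simpa [List.append_assoc] using htail
            have := congrArg List.getLast? h2'
            rw [List.getLast?_concat, List.getLast?_concat] at this
            exact hvw (Option.some.inj this)
          · -- l₂ = l₂' ++ [z] with z = v : extract a shorter closed chain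
            have h2' : l' ++ [v] = (l₁' ++ v :: w :: l₂') ++ [z] := by
              simpa [List.append_assoc] using htail
            have hz : v = z := by
              have := congrArg List.getLast? h2'
              rw [List.getLast?_concat, List.getLast?_concat] at this
              exact Option.some.inj this
            subst hz
            have hbig : List.Chain' (fun p q => A p q = 1 ∧ r p = r q) (w :: (l' ++ [v])) :=
              hch'
            have hsuffix : (v :: w :: (l₂' ++ [v])) <:+ (w :: (l' ++ [v])) := by
              exact List.IsSuffix.trans ⟨l₁', htail.symm⟩ (List.suffix_cons _ _)
            have hnew : List.Chain (fun p q => A p q = 1 ∧ r p = r q) v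
                ((w :: l₂') ++ [v]) := List.IsChain.suffix hbig hsuffix
            have hlen2 : l'.length + 1 = k := by simpa using hlen
            have hlen3 : l'.length + 1 = l₁'.length + l₂'.length + 3 := by
              have := congrArg List.length htail
              simp [List.length_append] at this
              omega
            exact IH (l₂'.length + 1) (by omega) v (w :: l₂') (by simp) hnew

private lemma arc_irrefl {V : Type*} [Fintype V] [DecidableEq V]
    {A : Matrix V V ℝ} {S : Finset V} {r : V → V} {n m : ℕ} (hG : IsGnm A S r n m) (x : V) :
    ¬ Relation.TransGen (fun p q => A p q = 1 ∧ r p = r q) x x := by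
  intro h
  rw [Relation.TransGen.head'_iff] at h
  obtain ⟨y, hxy, hyx⟩ := h
  obtain ⟨l, hl, hlast⟩ := List.exists_isChain_cons_of_relationReflTransGen hyx
  rcases List.eq_nil_or_concat' l with rfl | ⟨l', z, rfl⟩
  · have hyx' : y = x := hlast
    have h1 : A x x = 1 := hyx' ▸ hxy.1
    rw [hG.loopless] at h1
    norm_num at h1
  · have hz : z = x := by
      have h1 : ((y :: l') ++ [z]).getLast (by simp) = x := hlast
      rwa [List.getLast_append_singleton] at h1
    have hl' : List.Chain (fun p q => A p q = 1 ∧ r p = r q) y (l' ++ [x]) := hz ▸ hl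
    exact no_closed_chain hG (l'.length + 1) x (y :: l') (by simp)
      (List.Chain.cons hxy hl')

open Classical in
private noncomputable def cfun {V : Type*} [Fintype V] (A : Matrix V V ℝ) (r : V → V)
    (v : V) : ℕ :=
  (Finset.univ.filter
    (fun x => Relation.ReflTransGen (fun p q => A p q = 1 ∧ r p = r q) v x)).card

private lemma cfun_lt {V : Type*} [Fintype V] [DecidableEq V]
    {A : Matrix V V ℝ} {S : Finset V} {r : V → V} {n m : ℕ} (hG : IsGnm A S r n m) {u w : V}
    (h1 : A u w = 1) (h2 : r u = r w) : cfun A r w < cfun A r u := by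
  classical
  unfold cfun
  apply Finset.card_lt_card
  rw [Finset.ssubset_iff_of_subset]
  · refine ⟨u, Finset.mem_filter.2 ⟨Finset.mem_univ u, Relation.ReflTransGen.refl⟩, ?_⟩
    simp only [Finset.mem_filter, Finset.mem_univ, true_and]
    intro hru
    exact arc_irrefl hG u (Relation.TransGen.head' ⟨h1, h2⟩ hru)
  · intro x hx
    simp only [Finset.mem_filter, Finset.mem_univ, true_and] at hx ⊢
    exact Relation.ReflTransGen.head ⟨h1, h2⟩ hx

private noncomputable def bfun {V : Type*} [Fintype V] [DecidableEq V] (A : Matrix V V ℝ)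
    (S : Finset V) (r : V → V) (v : V) : ℤ :=
  if v ∈ S then 0 else 2 * ((cfun A r (r v) : ℤ) - (cfun A r v : ℤ)) + 1

private lemma bfun_eq_zero_iff {V : Type*} [Fintype V] [DecidableEq V]
    {A : Matrix V V ℝ} {S : Finset V} {r : V → V} (v : V) :
    bfun A S r v = 0 ↔ v ∈ S := by
  unfold bfun
  split_ifs with h
  · simp [h]
  · simp only [h, iff_false]
    omega

private lemma bfun_lt {V : Type*} [Fintype V] [DecidableEq V]
    {A : Matrix V V ℝ} {S : Finset V} {r : V → V} {n m : ℕ} (hG : IsGnm A S r n m) {i j : V}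
    (hij : A i j = 1) : (i ∈ S ∧ j ∈ S) ∨ bfun A S r i < bfun A S r j := by
  by_cases hiS : i ∈ S
  · by_cases hjS : j ∈ S
    · exact Or.inl ⟨hiS, hjS⟩
    · right
      have hr : r i = r j := (hG.arc_cases i j hij).resolve_left (fun h => hjS h.2)
      have hc : cfun A r j < cfun A r i := cfun_lt hG hij hr
      have hrj : r j = i := hr.symm.trans (hG.r_fix i hiS)
      simp only [bfun, if_pos hiS, if_neg hjS, hrj]
      omega
  · right
    have hr : r i = r j := (hG.arc_cases i j hij).resolve_left (fun h => hiS h.1)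
    have hc : cfun A r j < cfun A r i := cfun_lt hG hij hr
    by_cases hjS : j ∈ S
    · have hri : r i = j := hr.trans (hG.r_fix j hjS)
      simp only [bfun, if_neg hiS, if_pos hjS, hri]
      omega
    · simp only [bfun, if_neg hiS, if_neg hjS, hr]
      omega

private lemma Aalpha_offdiag {V : Type*} [Fintype V] [DecidableEq V] {α : ℝ}
    {A : Matrix V V ℝ} {i j : V} (h : i ≠ j) :
    Aalpha α A i j = (1 - α) * A i j := by
  simp [Aalpha, Matrix.add_apply, Matrix.smul_apply, Matrix.diagonal_apply_ne _ h, smul_eq_mul]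

private lemma Aalpha_diag {V : Type*} [Fintype V] [DecidableEq V] {α : ℝ}
    {A : Matrix V V ℝ} {S : Finset V} {r : V → V} {n m : ℕ} (hG : IsGnm A S r n m) (v : V) :
    Aalpha α A v v = α * outdeg A v := by
  simp [Aalpha, Matrix.add_apply, Matrix.smul_apply, Matrix.diagonal_apply_eq,
    hG.loopless v, smul_eq_mul]

private lemma Aalpha_BT {V : Type*} [Fintype V] [DecidableEq V]
    {A : Matrix V V ℝ} {S : Finset V} {r : V → V} {n m : ℕ} (hG : IsGnm A S r n m) (α : ℝ) :
    (Aalpha α A).BlockTriangular (bfun A S r) := by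
  intro i j hlt
  have hij : i ≠ j := fun h => by subst h; exact lt_irrefl _ hlt
  rw [Aalpha_offdiag hij]
  rcases hG.zero_one i j with h | h
  · rw [h, mul_zero]
  · exfalso
    rcases bfun_lt hG h with ⟨hi, hj⟩ | h'
    · rw [(bfun_eq_zero_iff i).2 hi, (bfun_eq_zero_iff j).2 hj] at hlt
      exact lt_irrefl _ hlt
    · exact absurd hlt (not_lt.2 h'.le)

private lemma Aalpha_samelevel {V : Type*} [Fintype V] [DecidableEq V]
    {A : Matrix V V ℝ} {S : Finset V} {r : V → V} {n m : ℕ} (hG : IsGnm A S r n m) (α : ℝ) :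
    ∀ u w, u ≠ w → bfun A S r u = bfun A S r w → bfun A S r u ≠ 0 → Aalpha α A u w = 0 := by
  intro u w huw heq hne0
  rw [Aalpha_offdiag huw]
  rcases hG.zero_one u w with h | h
  · rw [h, mul_zero]
  · exfalso
    rcases bfun_lt hG h with ⟨hu, _⟩ | h'
    · exact hne0 ((bfun_eq_zero_iff u).2 hu)
    · rw [heq] at h'
      exact lt_irrefl _ h'

private lemma charpoly_split {V : Type*} [Fintype V] [DecidableEq V]
    (M : Matrix V V ℝ) (S : Finset V) (b : V → ℤ)
    (hS : S.Nonempty) (hb0 : ∀ v, b v = 0 ↔ v ∈ S) (hBT : M.BlockTriangular b)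
    (hdiag : ∀ u w, u ≠ w → b u = b w → b u ≠ 0 → M u w = 0) :
    M.charpoly = (subm M S).charpoly * ∏ v ∈ Sᶜ, (X - C (M v v)) := by
  classical
  rw [hBT.charpoly]
  have h0 : (0 : ℤ) ∈ Finset.image b Finset.univ :=
    Finset.mem_image.2 ⟨hS.choose, Finset.mem_univ _, (hb0 _).2 hS.choose_spec⟩
  rw [← Finset.mul_prod_erase _ _ h0]
  congr 1
  · -- block 0 is the principal submatrix on S
    have hsub : subm M S = reindex (Equiv.subtypeEquivRight (fun v => hb0 v))
        (Equiv.subtypeEquivRight (fun v => hb0 v)) (M.toSquareBlock b 0) := by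
      ext i j
      simp [subm, Matrix.toSquareBlock_def, Equiv.subtypeEquivRight_symm_apply]
    rw [hsub, Matrix.charpoly_reindex]
  · -- the other blocks are diagonal
    rw [← Finset.prod_fiberwise_of_maps_to (g := b) (t := (Finset.image b Finset.univ).erase 0)
      (fun x hx => Finset.mem_erase.2
        ⟨fun h => (Finset.mem_compl.1 hx) ((hb0 x).1 h),
          Finset.mem_image_of_mem b (Finset.mem_univ x)⟩)
      (fun v => (X : Polynomial ℝ) - C (M v v))]
    apply Finset.prod_congr rfl
    intro k hk
    rw [Finset.mem_erase] at hk
    have hdiagblock : M.toSquareBlock b k =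
        Matrix.diagonal (fun i : {a // b a = k} => M i.1 i.1) := by
      ext i j
      by_cases hij : i = j
      · subst hij; simp [Matrix.toSquareBlock_def]
      · rw [Matrix.diagonal_apply_ne _ hij, Matrix.toSquareBlock_def]
        exact hdiag i.1 j.1 (fun h => hij (Subtype.ext h)) (i.2.trans j.2.symm)
          (by rw [i.2]; exact hk.1)
    have hcp : (M.toSquareBlock b k).charpoly =
        ∏ i : {a // b a = k}, (X - C (M i.1 i.1)) := by
      rw [hdiagblock, Matrix.charpoly]
      have hcm : charmatrix (Matrix.diagonal (fun i : {a // b a = k} => M i.1 i.1)) =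
          Matrix.diagonal (fun i : {a // b a = k} => (X : Polynomial ℝ) - C (M i.1 i.1)) := by
        ext i j
        by_cases hij : i = j
        · subst hij; simp
        · rw [charmatrix_apply_ne _ _ _ hij, Matrix.diagonal_apply_ne _ hij,
            Matrix.diagonal_apply_ne _ hij, map_zero, neg_zero]
      rw [hcm, Matrix.det_diagonal]
    rw [hcp]
    rw [Finset.prod_subtype (Sᶜ.filter (fun a => b a = k))
      (p := fun a => b a = k) ?_ (fun v => (X : Polynomial ℝ) - C (M v v))]
    intro x
    simp only [Finset.mem_filter, Finset.mem_compl]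
    constructor
    · exact fun h => h.2
    · intro h
      refine ⟨fun hxS => hk.1 ?_, h⟩
      rw [← h]
      exact (hb0 x).2 hxS

end Aux

/-- For `G ∈ 𝒢_n^m`, the characteristic polynomial of `A_α(G)` factors as the
characteristic polynomial of the principal submatrix on `S` times `∏_{v ∉ S} (X - α·d⁺(v))`;
in particular each `α·d⁺(v)` with `v ∉ S` is an eigenvalue of `A_α(G)`, and the remaining
`m` eigenvalues are exactly those of the submatrix. -/
theorem stmt0 {V : Type*} [Fintype V] [DecidableEq V] (A : Matrix V V ℝ) (S : Finset V)
    (r : V → V) (n m : ℕ) (hG : IsGnm A S r n m) (α : ℝ) (hα0 : 0 ≤ α) (hα1 : α < 1) :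
    (Aalpha α A).charpoly =
        (subm (Aalpha α A) S).charpoly * ∏ v ∈ Sᶜ, (X - C (α * outdeg A v)) ∧
    ((Aalpha α A).map ((↑) : ℝ → ℂ)).charpoly.roots =
        ((subm (Aalpha α A) S).map ((↑) : ℝ → ℂ)).charpoly.roots
          + Sᶜ.val.map (fun v => ((α * outdeg A v : ℝ) : ℂ)) ∧
    ∀ v ∉ S, ((Aalpha α A).map ((↑) : ℝ → ℂ)).charpoly.IsRoot ((α * outdeg A v : ℝ) : ℂ) := by
  classical
  have hS : S.Nonempty := Finset.card_pos.1 (by have := hG.two_le_m; rw [hG.card_S]; omega)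
  have part1 : (Aalpha α A).charpoly =
      (subm (Aalpha α A) S).charpoly * ∏ v ∈ Sᶜ, (X - C (α * outdeg A v)) := by
    rw [charpoly_split (Aalpha α A) S (bfun A S r) hS (fun v => bfun_eq_zero_iff v)
      (Aalpha_BT hG α) (Aalpha_samelevel hG α)]
    congr 1
    exact Finset.prod_congr rfl (fun v _ => by rw [Aalpha_diag hG v])
  have hcoe : ((↑) : ℝ → ℂ) = ⇑Complex.ofRealHom := rfl
  have hmap1 : ((Aalpha α A).map ((↑) : ℝ → ℂ)).charpoly
      = ((subm (Aalpha α A) S).map ((↑) : ℝ → ℂ)).charpoly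
        * ∏ v ∈ Sᶜ, (X - C ((α * outdeg A v : ℝ) : ℂ)) := by
    rw [hcoe, Matrix.charpoly_map, Matrix.charpoly_map, part1, Polynomial.map_mul,
      Polynomial.map_prod]
    congr 1
    refine Finset.prod_congr rfl (fun v _ => ?_)
    rw [Polynomial.map_sub, Polynomial.map_X, Polynomial.map_C]
  have hprodne : (∏ v ∈ Sᶜ, ((X : Polynomial ℂ) - C ((α * outdeg A v : ℝ) : ℂ))) ≠ 0 :=
    (monic_prod_of_monic _ _ (fun v _ => monic_X_sub_C _)).ne_zero
  have hsubne : ((subm (Aalpha α A) S).map ((↑) : ℝ → ℂ)).charpoly ≠ 0 :=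
    (Matrix.charpoly_monic _).ne_zero
  have hroots : ((Aalpha α A).map ((↑) : ℝ → ℂ)).charpoly.roots =
      ((subm (Aalpha α A) S).map ((↑) : ℝ → ℂ)).charpoly.roots
        + Sᶜ.val.map (fun v => ((α * outdeg A v : ℝ) : ℂ)) := by
    rw [hmap1, Polynomial.roots_mul (mul_ne_zero hsubne hprodne)]
    congr 1
    rw [Polynomial.roots_prod _ _ hprodne]
    simp only [Polynomial.roots_X_sub_C]
    rw [Multiset.bind_singleton]
  refine ⟨part1, hroots, ?_⟩
  intro v hv
  apply Polynomial.isRoot_of_mem_roots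
  rw [hroots]
  refine Multiset.mem_add.2 (Or.inr ?_)
  exact Multiset.mem_map_of_mem _ (Finset.mem_val.mpr (Finset.mem_compl.2 hv))
end

section
/- Let G be any digraph on a finite vertex set, let 0 ≤ α < 1, and let v be a vertex that does not lie on any strong component of G, i.e., there is no closed directed walk of positive length through v (equivalently, v lies on no directed cycle of G). Then α·d⁺(v) is an eigenvalue of A_α(G), i.e., a root of the characteristic polynomial of A_α(G). -/
open Polynomial Matrix Finset

/-- Evaluating the characteristic polynomial. -/
lemma eval_charpoly' {n : Type*} [Fintype n] [DecidableEq n] {R : Type*} [CommRing R]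
    (M : Matrix n n R) (x : R) :
    M.charpoly.eval x = (x • (1 : Matrix n n R) - M).det := by
  rw [Matrix.charpoly]
  have h := (RingHom.map_det (Polynomial.evalRingHom x) (Matrix.charmatrix M)).symm
  simp only [RingHom.mapMatrix_apply, Polynomial.coe_evalRingHom] at h
  rw [← h]
  congr 1
  ext i j
  by_cases h : i = j
  · subst h
    simp [Matrix.charmatrix_apply_eq, Matrix.one_apply]
  · simp [Matrix.charmatrix_apply_ne _ _ _ h, Matrix.one_apply_ne h]

/-- If a vertex `v` of a digraph lies on no strong component (no closed directed walk of
positive length passes through `v`), then `α·d⁺(v)` is an eigenvalue of `A_α(G)`. -/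
theorem stmt1 {V : Type*} [Fintype V] [DecidableEq V] (A : Matrix V V ℝ)
    (h01 : ∀ u v, A u v = 0 ∨ A u v = 1) (hloop : ∀ v, A v v = 0)
    (α : ℝ) (hα0 : 0 ≤ α) (hα1 : α < 1) (v : V)
    (hv : ¬ Relation.TransGen (fun a b => A a b = 1) v v) :
    ((Aalpha α A).map ((↑) : ℝ → ℂ)).charpoly.IsRoot ((α * outdeg A v : ℝ) : ℂ) := by
  classical
  set M : Matrix V V ℂ := (Aalpha α A).map ((↑) : ℝ → ℂ) with hM
  set lam : ℂ := ((α * outdeg A v : ℝ) : ℂ) with hlam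
  rw [Polynomial.IsRoot, eval_charpoly']
  set N : Matrix V V ℂ := lam • 1 - M with hN
  -- key facts about N
  set p : V → Prop := fun u => Relation.TransGen (fun a b => A a b = 1) v u with hp
  have hpv : ¬ p v := hv
  -- entries of N
  have hNentry : ∀ u w, N u w = lam * (if u = w then 1 else 0)
      - (if u = w then (α * outdeg A u : ℝ) else ((1 - α) * A u w : ℝ)) := by
    intro u w
    simp only [hN, Matrix.sub_apply, Matrix.smul_apply, Matrix.one_apply, smul_eq_mul, hM,
      Matrix.map_apply, Aalpha, Matrix.add_apply, Matrix.smul_apply, Matrix.diagonal_apply]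
    by_cases h : u = w
    · subst h; simp [hloop]
    · simp [h]
  have hzero : ∀ u w, p u → ¬ p w → N u w = 0 := by
    intro u w hu hw
    have huw : u ≠ w := by rintro rfl; exact hw hu
    have hA : A u w = 0 := by
      rcases h01 u w with h | h
      · exact h
      · exact absurd (hu.tail h) hw
    rw [hNentry u w, if_neg huw, if_neg huw, hA]
    simp
  have hrow : ∀ w, ¬ p w → N v w = 0 := by
    intro w hw
    by_cases h : v = w
    · subst h
      rw [hNentry v v, if_pos rfl, if_pos rfl, hlam]
      ring
    · have hA : A v w = 0 := by
        rcases h01 v w with h' | h'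
        · exact h'
        · exact absurd (Relation.TransGen.single (r := fun a b => A a b = 1) h') hw
      rw [hNentry v w, if_neg h, if_neg h, hA]
      simp
  -- reindex
  let e : {u // p u} ⊕ {u // ¬ p u} ≃ V := Equiv.sumCompl p
  have hdet : N.det = (N.submatrix e e).det := (Matrix.det_submatrix_equiv_self e N).symm
  rw [hdet]
  set N' := N.submatrix e e with hN'
  have h12 : N'.toBlocks₁₂ = 0 := by
    ext ⟨u, hu⟩ ⟨w, hw⟩
    exact hzero u w hu hw
  rw [← Matrix.fromBlocks_toBlocks N', h12, Matrix.det_fromBlocks_zero₁₂]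
  have h22 : N'.toBlocks₂₂.det = 0 := by
    apply Matrix.det_eq_zero_of_row_eq_zero ⟨v, hpv⟩
    intro ⟨w, hw⟩
    exact hrow w hw
  rw [h22, mul_zero]
end

section
/- Let G ∈ 𝒢_n^m with strong-component vertex set S, fiber sizes n_s, within-S outdegrees d*(s) and S×S adjacency matrix A*, and let 0 ≤ α < 1. Let M' = α·diag((d*(s) + n_s − 1)_{s∈S}) + (1−α)·A* (this is the block on S of the A_α-matrix of the digraph G' obtained from G by replacing each hung tree by an out-star of the same size with centre s, whose spectral radius equals ρ_α(G')). Then ρ_α(G) ≤ ρ(M'). -/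
open Polynomial Matrix Finset

-- AUX PART (to be appended before stmt2); assumes defs from proof.lean present.
set_option linter.unusedSectionVars false
set_option maxHeartbeats 1000000

attribute [local instance] Matrix.linftyOpNormedRing Matrix.linftyOpNormedAlgebra

namespace SpecAux

open Filter

section A
variable {ι : Type*} [Fintype ι] [DecidableEq ι] [Nonempty ι]

instance matCS : CompleteSpace (Matrix ι ι ℂ) :=
  inferInstance

omit [Nonempty ι] in
theorem eval_charpoly' (M : Matrix ι ι ℂ) (z : ℂ) :
    M.charpoly.eval z = (z • (1 : Matrix ι ι ℂ) - M).det := by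
  have h : (charmatrix M).map (Polynomial.eval z) = z • (1 : Matrix ι ι ℂ) - M := by
    ext i j
    by_cases h : i = j <;>
      simp [h, charmatrix_apply, Matrix.one_apply, Matrix.diagonal_apply, Matrix.smul_apply]
  rw [Matrix.charpoly, ← h, ← Polynomial.coe_evalRingHom, RingHom.map_det]
  rfl

omit [Nonempty ι] in
theorem map_pow' (M : Matrix ι ι ℝ) (k : ℕ) :
    (M.map ((↑) : ℝ → ℂ)) ^ k = (M ^ k).map ((↑) : ℝ → ℂ) := by
  have h : ∀ N : Matrix ι ι ℝ, N.map ((↑) : ℝ → ℂ) = Complex.ofRealHom.mapMatrix N := by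
    intro N; rfl
  rw [h, h, ← map_pow]

omit [Nonempty ι] in
theorem nnnorm_map' (M : Matrix ι ι ℝ) :
    ‖M.map ((↑) : ℝ → ℂ)‖₊ = ‖M‖₊ := by
  simp [Matrix.linfty_opNNNorm_def, Matrix.map_apply]

theorem abs_root_le_specRad (B C : Matrix ι ι ℝ) (hB : ∀ i j, 0 ≤ B i j)
    (hBC : ∀ i j, B i j ≤ C i j)
    {z : ℂ} (hz : (B.map ((↑) : ℝ → ℂ)).charpoly.IsRoot z) :
    ‖z‖ ≤ specRad C := by
  classical
  set Cc : Matrix ι ι ℂ := C.map ((↑) : ℝ → ℂ) with hCc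
  have hpow : ∀ k : ℕ, ∀ i j, 0 ≤ (B ^ k) i j ∧ (B ^ k) i j ≤ (C ^ k) i j := by
    intro k
    induction k with
    | zero =>
      intro i j
      by_cases h : i = j <;> simp [h, Matrix.one_apply]
    | succ k ih =>
      intro i j
      rw [pow_succ, pow_succ, Matrix.mul_apply, Matrix.mul_apply]
      constructor
      · exact Finset.sum_nonneg fun l _ => mul_nonneg (ih i l).1 (hB l j)
      · refine Finset.sum_le_sum fun l _ => mul_le_mul (ih i l).2 (hBC l j) (hB l j) ?_
        exact le_trans (ih i l).1 (ih i l).2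
  have hdet : (z • (1 : Matrix ι ι ℂ) - B.map ((↑) : ℝ → ℂ)).det = 0 := by
    rw [← eval_charpoly']; exact hz
  obtain ⟨x, hx0, hxe⟩ := (Matrix.exists_mulVec_eq_zero_iff).mpr hdet
  have hxeig : (B.map ((↑) : ℝ → ℂ)) *ᵥ x = z • x := by
    have := hxe
    rw [Matrix.sub_mulVec, Matrix.smul_mulVec, Matrix.one_mulVec, sub_eq_zero] at this
    exact this.symm
  have hkeig : ∀ k : ℕ, (B.map ((↑) : ℝ → ℂ)) ^ k *ᵥ x = z ^ k • x := by
    intro k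
    induction k with
    | zero => simp
    | succ k ih =>
      rw [pow_succ, ← Matrix.mulVec_mulVec, hxeig, Matrix.mulVec_smul, ih, smul_smul,
        pow_succ, mul_comm]
  obtain ⟨i0, hi0⟩ : ∃ i, x i ≠ 0 := Function.ne_iff.mp hx0
  set y : ι → ℝ := fun i => ‖x i‖ with hy
  have hy0 : 0 < y i0 := by simpa [hy] using hi0
  have hynn : 0 ≤ ‖y‖ := norm_nonneg _
  have key : ∀ k : ℕ, ‖z‖ ^ k * y i0 ≤ ‖C ^ k‖ * ‖y‖ := by
    intro k
    have h1 : ‖(((B.map ((↑) : ℝ → ℂ)) ^ k) *ᵥ x) i0‖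
        = ‖z‖ ^ k * y i0 := by
      rw [hkeig]
      simp only [Pi.smul_apply, smul_eq_mul, norm_mul, norm_pow, hy]
    have h2 : ‖(((B.map ((↑) : ℝ → ℂ)) ^ k) *ᵥ x) i0‖
        ≤ ((C ^ k) *ᵥ y) i0 := by
      rw [map_pow']
      simp only [Matrix.mulVec, dotProduct, Matrix.map_apply]
      refine le_trans (norm_sum_le _ _) (Finset.sum_le_sum fun j _ => ?_)
      rw [norm_mul, Complex.norm_real, Real.norm_of_nonneg (hpow k i0 j).1]
      exact mul_le_mul_of_nonneg_right (hpow k i0 j).2 (norm_nonneg _)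
    have h3 : ((C ^ k) *ᵥ y) i0 ≤ ‖C ^ k‖ * ‖y‖ :=
      le_trans (le_abs_self _) (le_trans (norm_le_pi_norm ((C ^ k) *ᵥ y) i0)
        (Matrix.linfty_opNorm_mulVec _ _))
    rw [← h1]; exact le_trans h2 h3
  set L : ℝ := specRad C with hL
  have hrootsfin : {w : ℂ | Cc.charpoly.IsRoot w}.Finite := by
    refine Set.Finite.ofFinset Cc.charpoly.roots.toFinset fun w => ?_
    simp [Polynomial.mem_roots, (Matrix.charpoly_monic Cc).ne_zero, Polynomial.IsRoot]
  have hsetfin : {x : ℝ | ∃ w : ℂ, Cc.charpoly.IsRoot w ∧ ‖w‖ = x}.Finite := by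
    have he : {x : ℝ | ∃ w : ℂ, Cc.charpoly.IsRoot w ∧ ‖w‖ = x}
        = (fun w : ℂ => ‖w‖) '' {w : ℂ | Cc.charpoly.IsRoot w} := by
      ext t; simp [Set.mem_image]
    rw [he]; exact hrootsfin.image _
  have hmemL : ∀ w : ℂ, Cc.charpoly.IsRoot w → ‖w‖ ≤ L :=
    fun w hw => le_csSup hsetfin.bddAbove ⟨w, hw, rfl⟩
  have hL0 : 0 ≤ L := by
    have hd : 0 < Cc.charpoly.degree := by
      rw [← Polynomial.natDegree_pos_iff_degree_pos, Matrix.charpoly_natDegree_eq_dim]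
      exact Fintype.card_pos
    obtain ⟨w, hw⟩ := Complex.exists_root hd
    exact le_trans (norm_nonneg w) (hmemL w hw)
  have hspec : spectralRadius ℂ Cc ≤ ENNReal.ofReal L := by
    rw [spectralRadius]
    refine iSup₂_le fun k hk => ?_
    have hkroot : Cc.charpoly.IsRoot k := by
      rw [spectrum.mem_iff] at hk
      rw [Polynomial.IsRoot, eval_charpoly']
      by_contra hne
      apply hk
      have hdet' : IsUnit (k • (1 : Matrix ι ι ℂ) - Cc).det := isUnit_iff_ne_zero.mpr hne
      have hu := (Matrix.isUnit_iff_isUnit_det _).mpr hdet'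
      rwa [Algebra.algebraMap_eq_smul_one]
    calc (‖k‖₊ : ENNReal) = ENNReal.ofReal ‖k‖ := (ofReal_norm k).symm
      _ ≤ ENNReal.ofReal L := ENNReal.ofReal_le_ofReal (by
            exact hmemL k hkroot)
  by_contra habs
  push_neg at habs
  set t : ℝ := (L + ‖z‖) / 2 with ht
  have hLt : L < t := by rw [ht]; linarith
  have htz : t < ‖z‖ := by rw [ht]; linarith
  have ht0 : 0 < t := lt_of_le_of_lt hL0 hLt
  have hofR : spectralRadius ℂ Cc < ENNReal.ofReal t :=
    lt_of_le_of_lt hspec ((ENNReal.ofReal_lt_ofReal_iff ht0).mpr hLt)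
  have hgel := spectrum.pow_nnnorm_pow_one_div_tendsto_nhds_spectralRadius Cc
  have hev : ∀ᶠ kk : ℕ in atTop, (‖Cc ^ kk‖₊ : ENNReal) ^ (1 / (kk : ℝ)) < ENNReal.ofReal t :=
    hgel.eventually_lt_const hofR
  have hKgt : Tendsto (fun kk : ℕ => (‖z‖ / t) ^ kk) atTop atTop :=
    tendsto_pow_atTop_atTop_of_one_lt ((one_lt_div ht0).mpr htz)
  have hev2 : ∀ᶠ kk : ℕ in atTop, ‖y‖ / y i0 < (‖z‖ / t) ^ kk :=
    hKgt.eventually_gt_atTop _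
  obtain ⟨kk, hk1, hk2, hk3⟩ := (hev.and (hev2.and (eventually_ge_atTop 1))).exists
  have hkne : (kk : ℝ) ≠ 0 := Nat.cast_ne_zero.mpr (by omega)
  have h4 : (‖Cc ^ kk‖₊ : ENNReal) < (ENNReal.ofReal t) ^ (kk : ℝ) := by
    have heq : ((‖Cc ^ kk‖₊ : ENNReal) ^ (1 / (kk : ℝ))) ^ (kk : ℝ)
        = (‖Cc ^ kk‖₊ : ENNReal) := by
      rw [← ENNReal.rpow_mul, one_div, inv_mul_cancel₀ hkne, ENNReal.rpow_one]
    rw [← heq]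
    exact ENNReal.rpow_lt_rpow hk1 (by positivity)
  have h5 : (‖Cc ^ kk‖₊ : ENNReal) < ENNReal.ofReal (t ^ kk) := by
    rw [← Real.rpow_natCast t kk, ← ENNReal.ofReal_rpow_of_pos ht0]
    exact h4
  have h6 : ‖C ^ kk‖ < t ^ kk := by
    rw [show Cc ^ kk = (C ^ kk).map ((↑) : ℝ → ℂ) from map_pow' C kk, nnnorm_map',
      ← enorm_eq_nnnorm, ← ofReal_norm, ENNReal.ofReal_lt_ofReal_iff_of_nonneg (norm_nonneg _)] at h5
    exact h5
  have h8 : ‖z‖ ^ kk * y i0 ≤ t ^ kk * ‖y‖ :=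
    (key kk).trans (mul_le_mul_of_nonneg_right (le_of_lt h6) hynn)
  have h9 : (‖z‖ / t) ^ kk ≤ ‖y‖ / y i0 := by
    rw [div_pow, div_le_div_iff₀ (pow_pos ht0 kk) hy0]
    calc ‖z‖ ^ kk * y i0 ≤ t ^ kk * ‖y‖ := h8
      _ = ‖y‖ * t ^ kk := mul_comm _ _
  exact absurd h9 (not_le.mpr hk2)

end A

section T
open SimpleGraph
variable {β : Type*} [DecidableEq β] {G' : SimpleGraph β}

/-- penultimate vertex of a walk -/
def pen {x y : β} (p : G'.Walk x y) : β := p.reverse.getVert 1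

lemma pen_concat {x w y : β} (q : G'.Walk x w) (h : G'.Adj w y) :
    pen (q.concat h) = w := by
  rw [pen, SimpleGraph.Walk.reverse_concat]
  simp [SimpleGraph.Walk.getVert_cons_succ, SimpleGraph.Walk.getVert_zero]

lemma isPath_concat {x w y : β} {q : G'.Walk x w} (hq : q.IsPath) (h : G'.Adj w y)
    (hy : y ∉ q.support) : (q.concat h).IsPath := by
  rw [← SimpleGraph.Walk.isPath_reverse_iff, SimpleGraph.Walk.reverse_concat]
  rw [SimpleGraph.Walk.cons_isPath_iff]
  exact ⟨hq.reverse, by simpa using hy⟩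

lemma mem_tail_of_end {x y : β} (q : G'.Walk x y) (hxy : x ≠ y) : y ∈ q.support.tail := by
  have h1 : y ∈ q.support := q.end_mem_support
  rw [q.support_eq_cons] at h1
  rcases List.mem_cons.mp h1 with h | h
  · exact absurd h.symm hxy
  · exact h

lemma not_end_mem_takeUntil {x y m : β} {p : G'.Walk x m} (hp : p.IsPath)
    (hv : y ∈ p.support) (hym : y ≠ m) : m ∉ (p.takeUntil y hv).support := by
  intro hmem
  have hspec := p.take_spec hv
  have hnodup := hp.support_nodup
  rw [← hspec, SimpleGraph.Walk.support_append, List.nodup_append] at hnodup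
  exact hnodup.2.2 m hmem m (mem_tail_of_end _ hym) rfl

theorem transGen_path (hA : G'.IsAcyclic) (D : β → β → Prop)
    (hadj : ∀ u v, D u v → G'.Adj u v) (hasym : ∀ u v, D u v → ¬ D v u) :
    ∀ u v, Relation.TransGen D u v →
      ∃ (w : β) (q : G'.Walk u w), q.IsPath ∧ v ∉ q.support ∧ D w v := by
  intro u v h
  induction h with
  | single huv =>
    refine ⟨u, SimpleGraph.Walk.nil, SimpleGraph.Walk.IsPath.nil, ?_, huv⟩
    simpa using (hadj _ _ huv).ne'
  | @tail m v hum hmv ih =>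
    obtain ⟨w, q, hq, hmq, hDwm⟩ := ih
    have adj_wm : G'.Adj w m := hadj _ _ hDwm
    have adj_mv : G'.Adj m v := hadj _ _ hmv
    set p : G'.Walk u m := q.concat adj_wm with hp_def
    have hp : p.IsPath := isPath_concat hq adj_wm hmq
    by_cases hvp : v ∈ p.support
    · exfalso
      have hvm : v ≠ m := adj_mv.ne'
      by_cases hvu : v = u
      · subst hvu
        have hp₂ : (SimpleGraph.Walk.cons adj_mv.symm
            (SimpleGraph.Walk.nil : G'.Walk m m)).IsPath := by
          simp [SimpleGraph.Walk.cons_isPath_iff, adj_mv.ne']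
        have hEq := SimpleGraph.isAcyclic_iff_path_unique.mp hA
          ⟨p, hp⟩ ⟨SimpleGraph.Walk.cons adj_mv.symm SimpleGraph.Walk.nil, hp₂⟩
        have hval : p = SimpleGraph.Walk.cons adj_mv.symm SimpleGraph.Walk.nil :=
          congrArg Subtype.val hEq
        have hwv : w = v := by
          have h1 : pen p = w := pen_concat q adj_wm
          have h2 : pen (SimpleGraph.Walk.cons adj_mv.symm
              (SimpleGraph.Walk.nil : G'.Walk m m)) = v := by
            rw [show (SimpleGraph.Walk.cons adj_mv.symm
              (SimpleGraph.Walk.nil : G'.Walk m m))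
                = (SimpleGraph.Walk.nil : G'.Walk v v).concat adj_mv.symm from rfl]
            exact pen_concat _ _
          rw [← h1, hval, h2]
        rw [hwv] at hDwm
        exact hasym _ _ hDwm hmv
      · have ht : (p.takeUntil v hvp).IsPath := hp.takeUntil hvp
        have hmt : m ∉ (p.takeUntil v hvp).support := not_end_mem_takeUntil hp hvp hvm
        have hp₂ : ((p.takeUntil v hvp).concat adj_mv.symm).IsPath :=
          isPath_concat ht adj_mv.symm hmt
        have hEq := SimpleGraph.isAcyclic_iff_path_unique.mp hA
          ⟨p, hp⟩ ⟨(p.takeUntil v hvp).concat adj_mv.symm, hp₂⟩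
        have hval : p = (p.takeUntil v hvp).concat adj_mv.symm :=
          congrArg Subtype.val hEq
        have hwv : w = v := by
          have h1 : pen p = w := pen_concat q adj_wm
          have h2 : pen ((p.takeUntil v hvp).concat adj_mv.symm) = v :=
            pen_concat _ _
          rw [← h1, hval, h2]
        rw [hwv] at hDwm
        exact hasym _ _ hDwm hmv
    · exact ⟨m, p, hp, hvp, hmv⟩

theorem no_dicycle (hA : G'.IsAcyclic) (D : β → β → Prop)
    (hadj : ∀ u v, D u v → G'.Adj u v) (hasym : ∀ u v, D u v → ¬ D v u) (v : β) :
    ¬ Relation.TransGen D v v := by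
  intro h
  obtain ⟨w, q, _, hv, _⟩ := transGen_path hA D hadj hasym v v h
  exact hv q.start_mem_support

end T

end SpecAux

namespace SpecAux

section StepI
variable {V : Type*} [Fintype V] [DecidableEq V] {A : Matrix V V ℝ} {S : Finset V}
  {r : V → V} {n m : ℕ}

def relArc (A : Matrix V V ℝ) (S : Finset V) (u v : V) : Prop :=
  A u v = 1 ∧ ¬(u ∈ S ∧ v ∈ S)

theorem relArc_r (hG : IsGnm A S r n m) {u v : V} (h : relArc A S u v) : r u = r v := by
  rcases hG.arc_cases u v h.1 with hb | hr
  · exact absurd hb h.2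
  · exact hr

theorem relArc_irrefl (hG : IsGnm A S r n m) (v : V) :
    ¬ Relation.TransGen (relArc A S) v v := by
  intro h
  set s := r v with hs
  have lift : ∀ w, Relation.TransGen (relArc A S) v w → ∀ hw : r w = s,
      Relation.TransGen (fun x y : {x : V // r x = s} => A x.1 y.1 = 1)
        ⟨v, rfl⟩ ⟨w, hw⟩ := by
    intro w hvw
    induction hvw with
    | single h1 => intro hw; exact Relation.TransGen.single h1.1
    | @tail mm ww h1 h2 ih =>
      intro hw
      have hm : r mm = s := by rw [relArc_r hG h2]; exact hw
      exact Relation.TransGen.tail (ih hm) h2.1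
  have htg := lift v h rfl
  refine no_dicycle (hG.fiber_tree s (hG.r_mem v)).IsAcyclic _ ?_ ?_ _ htg
  · intro x y hD
    show x ≠ y ∧ _
    refine ⟨?_, Or.inl hD⟩
    intro he
    rw [he, hG.loopless] at hD
    exact one_ne_zero hD.symm
  · intro x y hD hD'
    have h0 := hG.fiber_no_symm x.1 y.1 (by rw [x.2, y.2]) hD
    rw [h0] at hD'
    exact zero_ne_one hD'

/-- number of strict predecessors -/
noncomputable def predCard (A : Matrix V V ℝ) (S : Finset V) (v : V) : ℕ :=
  Set.ncard {w : V | Relation.TransGen (relArc A S) w v}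

theorem predCard_lt (hG : IsGnm A S r n m) {u v : V} (h : relArc A S u v) :
    predCard A S u < predCard A S v := by
  apply Set.ncard_lt_ncard
  · constructor
    · intro w hw
      exact Relation.TransGen.tail hw h
    · intro hsub
      have hu : u ∈ {w : V | Relation.TransGen (relArc A S) w v} :=
        Relation.TransGen.single h
      exact relArc_irrefl hG u (hsub hu)
  · exact Set.toFinite _

theorem predCard_lt_card (hG : IsGnm A S r n m) (v : V) :
    predCard A S v < Fintype.card V := by
  have h1 : {w : V | Relation.TransGen (relArc A S) w v} ⊂ Set.univ := by
    constructor
    · exact Set.subset_univ _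
    · intro hsub
      exact relArc_irrefl hG v (hsub (Set.mem_univ v))
  have := Set.ncard_lt_ncard h1 (Set.toFinite _)
  rwa [Set.ncard_univ, Nat.card_eq_fintype_card] at this

open Classical in
/-- the block function -/
noncomputable def blk (A : Matrix V V ℝ) (S : Finset V) (r : V → V) (v : V) : ℕ :=
  if v ∈ S then Fintype.card V
  else if Relation.TransGen (relArc A S) v (r v) then predCard A S v
  else Fintype.card V + 1 + predCard A S v

theorem blk_mem (hG : IsGnm A S r n m) {v : V} (hv : v ∈ S) :
    blk A S r v = Fintype.card V := by simp [blk, hv]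

theorem blk_not_mem_ne (hG : IsGnm A S r n m) {v : V} (hv : v ∉ S) :
    blk A S r v ≠ Fintype.card V := by
  classical
  rw [blk, if_neg hv]
  split_ifs with h
  · exact Nat.ne_of_lt (predCard_lt_card hG v)
  · omega

theorem blk_eq_iff_mem (hG : IsGnm A S r n m) (v : V) :
    blk A S r v = Fintype.card V ↔ v ∈ S := by
  constructor
  · intro h; by_contra hv; exact blk_not_mem_ne hG hv h
  · exact fun h => blk_mem hG h

theorem blk_mono (hG : IsGnm A S r n m) {u v : V} (h : A u v = 1) :
    blk A S r u ≤ blk A S r v := by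
  classical
  by_cases hbS : u ∈ S ∧ v ∈ S
  · rw [blk_mem hG hbS.1, blk_mem hG hbS.2]
  have hRel : relArc A S u v := ⟨h, hbS⟩
  have hruv : r u = r v := relArc_r hG hRel
  by_cases hvS : v ∈ S
  · have huS : u ∉ S := fun hu => hbS ⟨hu, hvS⟩
    have hrv : r v = v := hG.r_fix v hvS
    have hreach : Relation.TransGen (relArc A S) u (r u) := by
      rw [hruv, hrv]; exact Relation.TransGen.single hRel
    rw [blk_mem hG hvS, blk, if_neg huS, if_pos hreach]
    exact le_of_lt (predCard_lt_card hG u)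
  by_cases huS : u ∈ S
  · have hru : r u = u := hG.r_fix u huS
    have hnreach : ¬ Relation.TransGen (relArc A S) v (r v) := by
      intro hr
      rw [← hruv, hru] at hr
      exact relArc_irrefl hG u (Relation.TransGen.head hRel hr)
    rw [blk_mem hG huS, blk, if_neg hvS, if_neg hnreach]
    omega
  · by_cases hvreach : Relation.TransGen (relArc A S) v (r v)
    · have hureach : Relation.TransGen (relArc A S) u (r u) := by
        rw [hruv]; exact Relation.TransGen.head hRel hvreach
      rw [blk, blk, if_neg huS, if_neg hvS, if_pos hureach, if_pos hvreach]
      exact le_of_lt (predCard_lt hG hRel)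
    · by_cases hureach : Relation.TransGen (relArc A S) u (r u)
      · rw [blk, blk, if_neg huS, if_neg hvS, if_pos hureach, if_neg hvreach]
        have := predCard_lt_card hG u
        omega
      · rw [blk, blk, if_neg huS, if_neg hvS, if_neg hureach, if_neg hvreach]
        have := predCard_lt hG hRel
        omega

theorem blk_strict (hG : IsGnm A S r n m) {u v : V} (h : A u v = 1)
    (hbS : ¬(u ∈ S ∧ v ∈ S)) : blk A S r u ≠ blk A S r v := by
  classical
  have hRel : relArc A S u v := ⟨h, hbS⟩
  have hruv : r u = r v := relArc_r hG hRel
  by_cases hvS : v ∈ S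
  · have huS : u ∉ S := fun hu => hbS ⟨hu, hvS⟩
    rw [blk_mem hG hvS]
    exact blk_not_mem_ne hG huS
  by_cases huS : u ∈ S
  · rw [blk_mem hG huS]
    exact fun he => blk_not_mem_ne hG hvS he.symm
  · by_cases hvreach : Relation.TransGen (relArc A S) v (r v)
    · have hureach : Relation.TransGen (relArc A S) u (r u) := by
        rw [hruv]; exact Relation.TransGen.head hRel hvreach
      rw [blk, blk, if_neg huS, if_neg hvS, if_pos hureach, if_pos hvreach]
      exact Nat.ne_of_lt (predCard_lt hG hRel)
    · by_cases hureach : Relation.TransGen (relArc A S) u (r u)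
      · rw [blk, blk, if_neg huS, if_neg hvS, if_pos hureach, if_neg hvreach]
        have := predCard_lt_card hG u
        omega
      · rw [blk, blk, if_neg huS, if_neg hvS, if_neg hureach, if_neg hvreach]
        have := predCard_lt hG hRel
        omega

-- counting lemmas
theorem entry_nonneg (hG : IsGnm A S r n m) (u v : V) : 0 ≤ A u v := by
  rcases hG.zero_one u v with h | h <;> rw [h] <;> norm_num

theorem outdeg_nonneg (hG : IsGnm A S r n m) (v : V) : 0 ≤ outdeg A v :=
  Finset.sum_nonneg fun w _ => entry_nonneg hG v w

theorem dStar_nonneg (hG : IsGnm A S r n m) (s : V) : 0 ≤ dStar A S s :=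
  Finset.sum_nonneg fun w _ => entry_nonneg hG s w


theorem sum_ite_fiber (v s : V) (hvs : r v = s) :
    ∑ w : V, (if r w = s ∧ w ≠ v then (1 : ℝ) else 0) = (fibCard r s : ℝ) - 1 := by
  classical
  have h1 : ∑ w : V, (if r w = s ∧ w ≠ v then (1:ℝ) else 0)
      = ((Finset.univ.filter fun w => r w = s ∧ w ≠ v).card : ℝ) := by
    rw [Finset.sum_boole]
  have h2 : Finset.univ.filter (fun w => r w = s ∧ w ≠ v)
      = (Finset.univ.filter fun w => r w = s).erase v := by
    ext w
    simp [Finset.mem_erase, and_comm]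
  have hv : v ∈ Finset.univ.filter fun w => r w = s := by simp [hvs]
  have hpos : 1 ≤ (Finset.univ.filter fun w => r w = s).card :=
    Finset.card_pos.mpr ⟨v, hv⟩
  rw [h1, h2, Finset.card_erase_of_mem hv, fibCard, Nat.cast_sub hpos]
  norm_num

theorem outdeg_root_le (hG : IsGnm A S r n m) {s : V} (hs : s ∈ S) :
    outdeg A s ≤ dStar A S s + (fibCard r s : ℝ) - 1 := by
  classical
  have hrs : r s = s := hG.r_fix s hs
  have hsplit : outdeg A s
      = dStar A S s + ∑ w ∈ Finset.univ.filter (fun w => w ∉ S), A s w := by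
    rw [outdeg, dStar, ← Finset.sum_filter_add_sum_filter_not Finset.univ (fun w => w ∈ S)]
    congr 1
    refine Finset.sum_congr ?_ (fun _ _ => rfl)
    ext w; simp
  have hb : ∑ w ∈ Finset.univ.filter (fun w => w ∉ S), A s w
      ≤ ∑ w ∈ Finset.univ.filter (fun w => w ∉ S),
          (if r w = s ∧ w ≠ s then (1:ℝ) else 0) := by
    refine Finset.sum_le_sum fun w hw => ?_
    simp only [Finset.mem_filter] at hw
    rcases hG.zero_one s w with h | h
    · rw [h]; split_ifs <;> norm_num
    · rw [h]
      rcases hG.arc_cases s w h with hbo | hr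
      · exact absurd hbo.2 hw.2
      · have hws : r w = s := by rw [← hr, hrs]
        rw [if_pos ⟨hws, fun he => hw.2 (he ▸ hs)⟩]
  have hc : ∑ w ∈ Finset.univ.filter (fun w => w ∉ S), (if r w = s ∧ w ≠ s then (1:ℝ) else 0)
      ≤ ∑ w : V, (if r w = s ∧ w ≠ s then (1:ℝ) else 0) :=
    Finset.sum_le_sum_of_subset_of_nonneg (Finset.filter_subset _ _)
      (fun w _ _ => by split_ifs <;> norm_num)
  have hfib := sum_ite_fiber (r := r) s s hrs
  rw [hsplit]
  linarith

theorem outdeg_fiber_le (hG : IsGnm A S r n m) {v : V} (hv : v ∉ S) :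
    outdeg A v ≤ (fibCard r (r v) : ℝ) - 1 := by
  classical
  have hb : outdeg A v ≤ ∑ w : V, (if r w = r v ∧ w ≠ v then (1:ℝ) else 0) := by
    rw [outdeg]
    refine Finset.sum_le_sum fun w _ => ?_
    rcases hG.zero_one v w with h | h
    · rw [h]; split_ifs <;> norm_num
    · rw [h]
      rcases hG.arc_cases v w h with hbo | hr
      · exact absurd hbo.1 hv
      · have hne : w ≠ v := by
          rintro rfl
          rw [hG.loopless] at h
          exact one_ne_zero h.symm
        rw [if_pos ⟨hr.symm, hne⟩]
  have hfib := sum_ite_fiber (r := r) v (r v) rfl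
  linarith

end StepI

end SpecAux

/-- For `G ∈ 𝒢_n^m`, the `A_α` spectral radius of `G` is at most the spectral radius of
`M' = α·diag(d*(s) + n_s - 1) + (1-α)·A*`, the block on `S` of the `A_α`-matrix of the
digraph `G'` obtained by replacing each hung tree by an out-star of the same size. -/
theorem stmt2 {V : Type*} [Fintype V] [DecidableEq V] (A : Matrix V V ℝ) (S : Finset V)
    (r : V → V) (n m : ℕ) (hG : IsGnm A S r n m) (α : ℝ) (hα0 : 0 ≤ α) (hα1 : α < 1) :
    specRad (Aalpha α A) ≤
      specRad (α • Matrix.diagonal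
          (fun s : {v : V // v ∈ S} => dStar A S s.1 + (fibCard r s.1 : ℝ) - 1)
        + (1 - α) • subm A S) := by
  classical
  obtain ⟨s₀, hs₀⟩ : S.Nonempty := Finset.card_pos.mp (by have h2 := hG.two_le_m; rw [hG.card_S]; omega)
  haveI : Nonempty {v : V // v ∈ S} := ⟨⟨s₀, hs₀⟩⟩
  set M' : Matrix {v : V // v ∈ S} {v : V // v ∈ S} ℝ :=
    α • Matrix.diagonal (fun s : {v : V // v ∈ S} => dStar A S s.1 + (fibCard r s.1 : ℝ) - 1)
      + (1 - α) • subm A S with hM'def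
  have hα1' : (0:ℝ) ≤ 1 - α := by linarith
  have hsubm0 : ∀ s : {v // v ∈ S}, (subm A S) s s = 0 := by
    intro s; simp [subm, Matrix.submatrix_apply, hG.loopless]
  have hM'dd : ∀ s : {v // v ∈ S},
      M' s s = α * (dStar A S s.1 + (fibCard r s.1 : ℝ) - 1) := by
    intro s
    simp [hM'def, Matrix.add_apply, Matrix.smul_apply, Matrix.diagonal_apply_eq,
      hsubm0 s, smul_eq_mul]
  have hfib1 : ∀ s ∈ S, 1 ≤ (fibCard r s : ℝ) := by
    intro s hs
    have hmem : s ∈ Finset.univ.filter (fun v => r v = s) := by simp [hG.r_fix s hs]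
    have hpos : 0 < fibCard r s := Finset.card_pos.mpr ⟨s, hmem⟩
    exact_mod_cast hpos
  have hM'nn : ∀ i j, 0 ≤ M' i j := by
    intro i j
    by_cases hij : i = j
    · subst hij
      rw [hM'dd]
      have h1 := SpecAux.dStar_nonneg hG i.1
      have h2 := hfib1 i.1 i.2
      have : (0:ℝ) ≤ dStar A S i.1 + (fibCard r i.1 : ℝ) - 1 := by linarith
      exact mul_nonneg hα0 this
    · have : M' i j = (1 - α) * A i.1 j.1 := by
        simp [hM'def, Matrix.add_apply, Matrix.smul_apply, Matrix.diagonal_apply_ne _ hij,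
          subm, Matrix.submatrix_apply, smul_eq_mul]
      rw [this]
      exact mul_nonneg hα1' (SpecAux.entry_nonneg hG _ _)
  have diag_le : ∀ s' : {v // v ∈ S}, M' s' s' ≤ specRad M' := by
    intro s'
    set c : ℝ := M' s' s' with hc
    have hc0 : 0 ≤ c := hM'nn s' s'
    set B : Matrix {v : V // v ∈ S} {v : V // v ∈ S} ℝ :=
      Matrix.diagonal (fun t => if t = s' then c else 0) with hB
    have hB0 : ∀ i j, 0 ≤ B i j := by
      intro i j
      by_cases hij : i = j
      · subst hij
        rw [hB, Matrix.diagonal_apply_eq]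
        split_ifs <;> simp [hc0]
      · rw [hB, Matrix.diagonal_apply_ne _ hij]
    have hBM : ∀ i j, B i j ≤ M' i j := by
      intro i j
      by_cases hij : i = j
      · subst hij
        rw [hB, Matrix.diagonal_apply_eq]
        split_ifs with h
        · subst h; exact le_refl _
        · exact hM'nn i i
      · rw [hB, Matrix.diagonal_apply_ne _ hij]
        exact hM'nn i j
    have hroot : (B.map ((↑) : ℝ → ℂ)).charpoly.IsRoot (c : ℂ) := by
      have hBc : B.map ((↑) : ℝ → ℂ)
          = Matrix.diagonal (fun t : {v : V // v ∈ S} =>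
              ((if t = s' then c else 0 : ℝ) : ℂ)) := by
        rw [hB, Matrix.diagonal_map (by norm_num)]
      rw [Polynomial.IsRoot, SpecAux.eval_charpoly', hBc]
      have heq : (c : ℂ) • (1 : Matrix {v : V // v ∈ S} {v : V // v ∈ S} ℂ)
          - Matrix.diagonal (fun t : {v : V // v ∈ S} =>
              ((if t = s' then c else 0 : ℝ) : ℂ))
          = Matrix.diagonal (fun t : {v : V // v ∈ S} =>
              (c : ℂ) - ((if t = s' then c else 0 : ℝ) : ℂ)) := by
        ext i j
        by_cases h : i = j <;>
          simp [h, Matrix.one_apply, Matrix.diagonal_apply, Matrix.smul_apply]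
      rw [heq, Matrix.det_diagonal]
      refine Finset.prod_eq_zero (Finset.mem_univ s') ?_
      simp
    have hle := SpecAux.abs_root_le_specRad B M' hB0 hBM hroot
    rwa [Complex.norm_real, Real.norm_of_nonneg hc0] at hle
  have h0spec : 0 ≤ specRad M' := le_trans (hM'nn _ _) (diag_le ⟨s₀, hs₀⟩)
  show sSup {x : ℝ | ∃ z : ℂ,
      ((Aalpha α A).map ((↑) : ℝ → ℂ)).charpoly.IsRoot z ∧ ‖z‖ = x} ≤ specRad M'
  refine Real.sSup_le ?_ h0spec
  rintro x ⟨z, hz, rfl⟩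
  set b := SpecAux.blk A S r with hbdef
  have hBT : ((Aalpha α A).map ((↑) : ℝ → ℂ)).BlockTriangular b := by
    intro i j hij
    have hne : i ≠ j := by rintro rfl; exact lt_irrefl _ hij
    have hA0 : A i j = 0 := by
      rcases hG.zero_one i j with h | h
      · exact h
      · exact absurd (SpecAux.blk_mono hG h) (not_le.mpr hij)
    simp [Matrix.map_apply, Aalpha, Matrix.add_apply, Matrix.smul_apply,
      Matrix.diagonal_apply_ne _ hne, hA0]
  have hfac := hBT.charpoly
  rw [Polynomial.IsRoot, hfac, Polynomial.eval_prod] at hz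
  obtain ⟨a, ha, hza⟩ := Finset.prod_eq_zero_iff.mp hz
  by_cases haS : a = Fintype.card V
  · subst haS
    set e : {v : V // b v = Fintype.card V} ≃ {v : V // v ∈ S} :=
      Equiv.subtypeEquivRight (fun v => SpecAux.blk_eq_iff_mem hG v) with he
    set Bmat : Matrix {v : V // v ∈ S} {v : V // v ∈ S} ℝ :=
      α • Matrix.diagonal (fun s : {v : V // v ∈ S} => outdeg A s.1)
        + (1 - α) • subm A S with hBmat
    have hre : (Matrix.reindex e e
        (((Aalpha α A).map ((↑) : ℝ → ℂ)).toSquareBlock b (Fintype.card V)))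
        = Bmat.map ((↑) : ℝ → ℂ) := by
      ext i j
      show (((Aalpha α A) ((e.symm i : {v // b v = Fintype.card V}) : V)
          ((e.symm j : {v // b v = Fintype.card V}) : V) : ℝ) : ℂ) = ((Bmat i j : ℝ) : ℂ)
      have hei : ((e.symm i : {v // b v = Fintype.card V}) : V) = i.1 := by
        rw [he]; rfl
      have hej : ((e.symm j : {v // b v = Fintype.card V}) : V) = j.1 := by
        rw [he]; rfl
      rw [hei, hej]
      congr 1
      by_cases hij : i = j
      · subst hij
        simp [Aalpha, hBmat, Matrix.add_apply, Matrix.smul_apply,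
          Matrix.diagonal_apply_eq, subm, Matrix.submatrix_apply, hG.loopless]
      · have hv : i.1 ≠ j.1 := fun hh => hij (Subtype.ext hh)
        simp [Aalpha, hBmat, Matrix.add_apply, Matrix.smul_apply,
          Matrix.diagonal_apply_ne _ hij, Matrix.diagonal_apply_ne _ hv, subm,
          Matrix.submatrix_apply]
    have hzroot : (Bmat.map ((↑) : ℝ → ℂ)).charpoly.IsRoot z := by
      rw [Polynomial.IsRoot, ← hre, Matrix.charpoly_reindex]
      exact hza
    have hBm0 : ∀ i j, 0 ≤ Bmat i j := by
      intro i j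
      by_cases hij : i = j
      · subst hij
        have : Bmat i i = α * outdeg A i.1 := by
          simp [hBmat, Matrix.add_apply, Matrix.smul_apply, Matrix.diagonal_apply_eq,
            hsubm0 i, smul_eq_mul]
        rw [this]
        exact mul_nonneg hα0 (SpecAux.outdeg_nonneg hG i.1)
      · have : Bmat i j = (1 - α) * A i.1 j.1 := by
          simp [hBmat, Matrix.add_apply, Matrix.smul_apply, Matrix.diagonal_apply_ne _ hij,
            subm, Matrix.submatrix_apply, smul_eq_mul]
        rw [this]
        exact mul_nonneg hα1' (SpecAux.entry_nonneg hG _ _)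
    have hBmM : ∀ i j, Bmat i j ≤ M' i j := by
      intro i j
      by_cases hij : i = j
      · subst hij
        have h1 : Bmat i i = α * outdeg A i.1 := by
          simp [hBmat, Matrix.add_apply, Matrix.smul_apply, Matrix.diagonal_apply_eq,
            hsubm0 i, smul_eq_mul]
        rw [h1, hM'dd]
        exact mul_le_mul_of_nonneg_left (SpecAux.outdeg_root_le hG i.2) hα0
      · have h1 : Bmat i j = (1 - α) * A i.1 j.1 := by
          simp [hBmat, Matrix.add_apply, Matrix.smul_apply, Matrix.diagonal_apply_ne _ hij,
            subm, Matrix.submatrix_apply, smul_eq_mul]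
        have h2 : M' i j = (1 - α) * A i.1 j.1 := by
          simp [hM'def, Matrix.add_apply, Matrix.smul_apply, Matrix.diagonal_apply_ne _ hij,
            subm, Matrix.submatrix_apply, smul_eq_mul]
        rw [h1, h2]
    exact SpecAux.abs_root_le_specRad Bmat M' hBm0 hBmM hzroot
  · have hnotS : ∀ v : V, b v = a → v ∉ S := by
      intro v hv hvS
      exact haS (by rw [← hv, hbdef, SpecAux.blk_mem hG hvS])
    have hdiag : (((Aalpha α A).map ((↑) : ℝ → ℂ)).toSquareBlock b a)
        = Matrix.diagonal (fun v : {v : V // b v = a} => ((α * outdeg A v.1 : ℝ) : ℂ)) := by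
      ext i j
      by_cases hij : i = j
      · subst hij
        simp [Matrix.toSquareBlock_def, Matrix.map_apply, Aalpha, Matrix.add_apply,
          Matrix.smul_apply, Matrix.diagonal_apply_eq, hG.loopless, smul_eq_mul]
      · have hv : i.1 ≠ j.1 := fun hh => hij (Subtype.ext hh)
        have hA0 : A i.1 j.1 = 0 := by
          rcases hG.zero_one i.1 j.1 with h | h
          · exact h
          · exfalso
            have hnb : ¬(i.1 ∈ S ∧ j.1 ∈ S) := fun hcc => hnotS i.1 i.2 hcc.1
            exact SpecAux.blk_strict hG h hnb (by rw [← hbdef, i.2, j.2])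
        simp [Matrix.toSquareBlock_def, Matrix.map_apply, Aalpha, Matrix.add_apply,
          Matrix.smul_apply, Matrix.diagonal_apply_ne _ hv, Matrix.diagonal_apply_ne _ hij,
          hA0]
    rw [hdiag, SpecAux.eval_charpoly'] at hza
    have heq2 : z • (1 : Matrix {v : V // b v = a} {v : V // b v = a} ℂ)
        - Matrix.diagonal (fun v : {v : V // b v = a} => ((α * outdeg A v.1 : ℝ) : ℂ))
        = Matrix.diagonal (fun v : {v : V // b v = a} =>
            z - ((α * outdeg A v.1 : ℝ) : ℂ)) := by
      ext i j
      by_cases h : i = j <;>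
        simp [h, Matrix.one_apply, Matrix.diagonal_apply, Matrix.smul_apply]
    rw [heq2, Matrix.det_diagonal] at hza
    obtain ⟨v, -, hv0⟩ := Finset.prod_eq_zero_iff.mp hza
    have hzv : z = ((α * outdeg A v.1 : ℝ) : ℂ) := sub_eq_zero.mp hv0
    have hvS : v.1 ∉ S := hnotS v.1 v.2
    set s' : {w : V // w ∈ S} := ⟨r v.1, hG.r_mem v.1⟩ with hs'
    have hb1 : α * outdeg A v.1 ≤ M' s' s' := by
      rw [hM'dd]
      have h8 := SpecAux.outdeg_fiber_le hG hvS
      have h9 := SpecAux.dStar_nonneg hG (r v.1)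
      have hle1 : α * outdeg A v.1 ≤ α * ((fibCard r (r v.1) : ℝ) - 1) :=
        mul_le_mul_of_nonneg_left h8 hα0
      have hle2 : α * ((fibCard r (r v.1) : ℝ) - 1)
          ≤ α * (dStar A S (r v.1) + (fibCard r (r v.1) : ℝ) - 1) :=
        mul_le_mul_of_nonneg_left (by linarith) hα0
      calc α * outdeg A v.1 ≤ α * ((fibCard r (r v.1) : ℝ) - 1) := hle1
        _ ≤ α * (dStar A S (r v.1) + (fibCard r (r v.1) : ℝ) - 1) := hle2
        _ = α * (dStar A S s'.1 + (fibCard r s'.1 : ℝ) - 1) := by rw [hs']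
    rw [hzv, Complex.norm_real,
      Real.norm_of_nonneg (mul_nonneg hα0 (SpecAux.outdeg_nonneg hG v.1))]
    exact le_trans hb1 (diag_le s')
end

section
/- For any digraph G on a finite vertex set V with |V| = n and any 0 ≤ α < 1, the A_α energy satisfies E_α(G) = Σ_{i=1}^n λ_{αi}² = α²·Σ_{v∈V}(d⁺(v))² + (1−α)²·c₂(G), where λ_{α1},…,λ_{αn} are the eigenvalues of A_α(G). -/
open Polynomial Matrix Finset

/-- Key identity: the characteristic polynomial of `M * M` composed with `X ^ 2`
factors as `charpoly M * det (charmatrix (-M))`. -/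
lemma comp_sq_aux {n : Type*} [Fintype n] [DecidableEq n] (M : Matrix n n ℂ) :
    ((M * M).charpoly).comp (X ^ 2) = M.charpoly * (charmatrix (-M)).det := by
  have hφ : ∀ f : ℂ[X], f.comp (X ^ 2) = eval₂RingHom C (X ^ 2 : ℂ[X]) f := fun f => rfl
  rw [hφ, Matrix.charpoly, RingHom.map_det, RingHom.mapMatrix_apply]
  have hmap : (charmatrix (M * M)).map (eval₂RingHom C (X ^ 2 : ℂ[X])) =
      Matrix.scalar n ((X : ℂ[X]) ^ 2) - (M.map C) * (M.map C) := by
    unfold charmatrix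
    rw [RingHom.mapMatrix_apply, Matrix.map_sub _ (fun a b => map_sub _ a b), ← Matrix.map_mul]
    congr 1
    · rw [Matrix.scalar_apply, Matrix.scalar_apply, Matrix.diagonal_map (by simp)]
      simp
    · rw [Matrix.map_map]
      congr 1
      ext a : 1
      simp
  rw [hmap]
  have hneg : charmatrix (-M) = Matrix.scalar n (X : ℂ[X]) + M.map C := by
    unfold charmatrix
    rw [map_neg, sub_neg_eq_add, RingHom.mapMatrix_apply]
  have hfac : Matrix.scalar n ((X : ℂ[X]) ^ 2) - (M.map C) * (M.map C) =
      charmatrix M * charmatrix (-M) := by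
    rw [hneg]
    unfold charmatrix
    rw [RingHom.mapMatrix_apply, sub_mul, mul_add, mul_add, sq, _root_.map_mul (Matrix.scalar n),
      (Matrix.scalar_commute (X : ℂ[X]) (Commute.all _) (M.map C))]
    abel
  rw [hfac, charpoly, det_mul]

/-- The roots of the characteristic polynomial of `M * M` are the squares of the roots of
the characteristic polynomial of `M` (with multiplicity). -/
lemma charpoly_mul_self_roots_aux {n : Type*} [Fintype n] [DecidableEq n] (M : Matrix n n ℂ) :
    (M * M).charpoly.roots = M.charpoly.roots.map (fun z => z ^ 2) := by
  set p := M.charpoly with hp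
  set q := (M * M).charpoly with hq
  have hpm : p.Monic := Matrix.charpoly_monic M
  have hps : p.Splits := IsAlgClosed.splits p
  have hcard : Multiset.card p.roots = Fintype.card n := by
    rw [(Polynomial.splits_iff_card_roots).mp hps, Matrix.charpoly_natDegree_eq_dim]
  have hpprod : p = (p.roots.map fun r => X - C r).prod :=
    (hps.eq_prod_roots_of_monic hpm)
  -- det (charmatrix (-M)) = ∏ (X + C r)
  have hdetneg : (charmatrix (-M)).det = (p.roots.map fun r => X + C r).prod := by
    have hψ : ∀ f : ℂ[X], f.comp (-X) = eval₂RingHom C (-X : ℂ[X]) f := fun f => rfl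
    have h1 : p.comp (-X) = ((-1 : ℂ[X]) ^ Fintype.card n) * (charmatrix (-M)).det := by
      rw [hψ, hp, Matrix.charpoly, RingHom.map_det, RingHom.mapMatrix_apply]
      have hm : (charmatrix M).map (eval₂RingHom C (-X : ℂ[X])) = -(charmatrix (-M)) := by
        ext i j
        by_cases h : i = j
        · simp [h, Matrix.map_apply, Matrix.neg_apply]
          ring
        · simp [h, Matrix.map_apply, Matrix.neg_apply]
      rw [hm, Matrix.det_neg]
    have h2 : p.comp (-X) =
        ((-1 : ℂ[X]) ^ Fintype.card n) * (p.roots.map fun r => X + C r).prod := by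
      conv_lhs => rw [hpprod]
      rw [hψ, map_multiset_prod, Multiset.map_map]
      have h3 : (p.roots.map ((eval₂RingHom C (-X : ℂ[X])) ∘ fun r => X - C r)) =
          p.roots.map fun r => (-1 : ℂ[X]) * (X + C r) := by
        apply Multiset.map_congr rfl
        intro r _
        simp
        ring
      rw [h3, Multiset.prod_map_mul, Multiset.map_const', Multiset.prod_replicate, hcard]
    have hne : ((-1 : ℂ[X]) ^ Fintype.card n) ≠ 0 := by
      simp [pow_ne_zero]
    have := h1.symm.trans h2
    exact mul_left_cancel₀ hne this
  -- q.comp (X^2) = g.comp (X^2)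
  set g : ℂ[X] := ((p.roots.map fun z => z ^ 2).map fun a => X - C a).prod with hg
  have hkey : q.comp (X ^ 2) = g.comp (X ^ 2) := by
    rw [comp_sq_aux, hdetneg]
    have h4 : M.charpoly * ((p.roots.map fun r => X + C r)).prod
        = ((p.roots.map fun r => X - C r)).prod * ((p.roots.map fun r => X + C r)).prod :=
      congrArg (fun t => t * ((p.roots.map fun r => X + C r)).prod) hpprod
    rw [h4, ← Multiset.prod_map_mul]
    have hφ : ∀ f : ℂ[X], f.comp (X ^ 2) = eval₂RingHom C (X ^ 2 : ℂ[X]) f := fun f => rfl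
    rw [hφ, hg, map_multiset_prod, Multiset.map_map, Multiset.map_map]
    apply congrArg
    apply Multiset.map_congr rfl
    intro r _
    simp only [Function.comp_apply, coe_eval₂RingHom, eval₂_sub, eval₂_X, eval₂_C, map_pow,
      eval₂_pow]
    ring
  have hqg : q = g := by
    apply Polynomial.funext
    intro z
    obtain ⟨x, hx⟩ := IsAlgClosed.exists_pow_nat_eq z (n := 2) (by norm_num)
    have h1 := congrArg (Polynomial.eval x) hkey
    rw [Polynomial.eval_comp, Polynomial.eval_comp] at h1
    simpa [hx] using h1
  rw [hqg, hg, Polynomial.roots_multiset_prod_X_sub_C]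

/-- The sum of the squares of the eigenvalues of a complex matrix equals `trace (M * M)`. -/
lemma sum_sq_roots_aux {n : Type*} [Fintype n] [DecidableEq n] (M : Matrix n n ℂ) :
    ((M.charpoly).roots.map (fun z => z ^ 2)).sum = Matrix.trace (M * M) := by
  rw [Matrix.trace_eq_sum_roots_charpoly, charpoly_mul_self_roots_aux]

/-- For any digraph `G`, `E_α(G) = Σᵢ λ_{αi}² = α²·Σ_v (d⁺(v))² + (1-α)²·c₂(G)`,
where the `λ_{αi}` are the eigenvalues of `A_α(G)` and `c₂(G) = trace(A(G)²)`. -/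
theorem stmt5 {V : Type*} [Fintype V] [DecidableEq V] (A : Matrix V V ℝ)
    (h01 : ∀ u v, A u v = 0 ∨ A u v = 1) (hloop : ∀ v, A v v = 0)
    (α : ℝ) (hα0 : 0 ≤ α) (hα1 : α < 1) :
    (((Aalpha α A).map ((↑) : ℝ → ℂ)).charpoly.roots.map (fun z => z ^ 2)).sum =
        ((Ealpha α A : ℝ) : ℂ) ∧
    Ealpha α A = α ^ 2 * ∑ v, (outdeg A v) ^ 2 + (1 - α) ^ 2 * Matrix.trace (A * A) := by
  constructor
  · rw [sum_sq_roots_aux]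
    have h1 : (Aalpha α A).map ((↑) : ℝ → ℂ) = (Aalpha α A).map Complex.ofRealHom := rfl
    rw [h1, ← Matrix.map_mul]
    simp [Matrix.trace, Ealpha, Matrix.map_apply, Matrix.diag]
  · have hDA : Matrix.trace (Matrix.diagonal (outdeg A) * A) = 0 := by
      simp [Matrix.trace, Matrix.diag, Matrix.diagonal_mul, hloop]
    have hAD : Matrix.trace (A * Matrix.diagonal (outdeg A)) = 0 := by
      simp [Matrix.trace, Matrix.diag, Matrix.mul_diagonal, hloop]
    simp only [Ealpha, Aalpha, add_mul, mul_add, Matrix.smul_mul, Matrix.mul_smul,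
      Matrix.trace_add, Matrix.trace_smul, Matrix.diagonal_mul_diagonal, smul_smul,
      hDA, hAD, smul_eq_mul, mul_zero, add_zero, zero_add, Matrix.trace_diagonal]
    have hsq : ∑ v, outdeg A v * outdeg A v = ∑ v, (outdeg A v) ^ 2 := by
      simp [sq]
    rw [hsq]
    ring
end

section
/- Let G be a digraph in which every arc is simple, i.e., for all vertices u, v it is not the case that both (u,v) and (v,u) are arcs (A(G) u v = 1 implies A(G) v u = 0). Then for every 0 ≤ α < 1, E_α(G) = α²·Σ_{v}(d⁺(v))². -/
open Polynomial Matrix Finset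

/-- If every arc of the digraph `G` is simple (no symmetric pair of arcs), then
`E_α(G) = α²·Σ_v (d⁺(v))²`. -/
theorem stmt6 {V : Type*} [Fintype V] [DecidableEq V] (A : Matrix V V ℝ)
    (h01 : ∀ u v, A u v = 0 ∨ A u v = 1) (hloop : ∀ v, A v v = 0)
    (hsimple : ∀ u v, A u v = 1 → A v u = 0)
    (α : ℝ) (hα0 : 0 ≤ α) (hα1 : α < 1) :
    Ealpha α A = α ^ 2 * ∑ v, (outdeg A v) ^ 2 := by
  have hM : ∀ u v, Aalpha α A u v
      = α * (Matrix.diagonal (outdeg A)) u v + (1 - α) * A u v := by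
    intro u v; simp [Aalpha]
  have key : ∀ u v : V, Aalpha α A u v * Aalpha α A v u
      = if u = v then α ^ 2 * (outdeg A u) ^ 2 else 0 := by
    intro u v
    rcases eq_or_ne u v with rfl | huv
    · simp [hM, Matrix.diagonal_apply_eq, hloop u]; ring
    · have hAA : A u v * A v u = 0 := by
        rcases h01 u v with h | h
        · rw [h, zero_mul]
        · rw [hsimple u v h, mul_zero]
      rw [hM, hM, Matrix.diagonal_apply_ne _ huv, Matrix.diagonal_apply_ne _ huv.symm,
        if_neg huv]
      linear_combination (1 - α) ^ 2 * hAA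
  unfold Ealpha
  rw [Matrix.trace, Finset.mul_sum]
  apply Finset.sum_congr rfl
  intro u _
  rw [Matrix.diag_apply, Matrix.mul_apply]
  rw [Finset.sum_congr rfl (fun v _ => key u v)]
  simp
end

section
/- Let G be a symmetric digraph, i.e., its adjacency matrix A(G) is a symmetric matrix, and let e = Σ_{u,v} A(G) u v be the number of arcs of G. Then for every 0 ≤ α < 1, E_α(G) = α²·Σ_{v}(d⁺(v))² + (1−α)²·e. -/
open Polynomial Matrix Finset

/-- If the digraph `G` is symmetric (its adjacency matrix is symmetric) and has `e` arcs,
then `E_α(G) = α²·Σ_v (d⁺(v))² + (1-α)²·e`. -/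
theorem stmt7 {V : Type*} [Fintype V] [DecidableEq V] (A : Matrix V V ℝ)
    (h01 : ∀ u v, A u v = 0 ∨ A u v = 1) (hloop : ∀ v, A v v = 0)
    (hsymm : ∀ u v, A u v = A v u)
    (α : ℝ) (hα0 : 0 ≤ α) (hα1 : α < 1) :
    Ealpha α A = α ^ 2 * ∑ v, (outdeg A v) ^ 2 + (1 - α) ^ 2 * ∑ u, ∑ v, A u v := by
  have hsq : ∀ u v, A u v * A v u = A u v := by
    intro u v
    rw [hsymm v u]
    rcases h01 u v with h | h <;> simp [h]
  have key : ∀ u v, Aalpha α A u v * Aalpha α A v u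
      = α ^ 2 * (if u = v then (outdeg A u) ^ 2 else 0) + (1 - α) ^ 2 * A u v := by
    intro u v
    simp only [Aalpha, Matrix.add_apply, Matrix.smul_apply, Matrix.diagonal_apply, smul_eq_mul]
    by_cases h : u = v
    · subst h
      simp [hloop u]
      ring
    · have h' : ¬ v = u := fun e => h e.symm
      simp only [h, h', if_false, mul_zero, zero_add]
      rw [show (1 - α) * A u v * ((1 - α) * A v u) = (1 - α) ^ 2 * (A u v * A v u) by ring,
        hsq]
  unfold Ealpha
  simp only [Matrix.trace, Matrix.diag_apply, Matrix.mul_apply, key,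
    Finset.sum_add_distrib, Finset.sum_ite_eq, Finset.mem_univ, if_true,
    ← Finset.mul_sum]
end

section
/- Let T be a directed tree on n vertices and let 0 ≤ α < 1. Then α²(n−1) ≤ E_α(T) ≤ α²(n−1)². Moreover, if 0 < α < 1, then E_α(T) = α²(n−1) if and only if T is an in-tree (every vertex has outdegree at most 1), and E_α(T) = α²(n−1)² if and only if T is an out-star (some vertex has outdegree n−1 and all other vertices have outdegree 0). -/
open Polynomial Matrix Finset

/-- The underlying undirected graph of a digraph: `u ~ w` iff `(u,w)` or `(w,u)` is an arc. -/
def underGraph {V : Type*} (A : Matrix V V ℝ) : SimpleGraph V where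
  Adj u w := u ≠ w ∧ (A u w = 1 ∨ A w u = 1)
  symm := ⟨fun _ _ h => ⟨h.1.symm, h.2.symm⟩⟩
  loopless := ⟨fun _ h => h.1 rfl⟩

/-- For a directed tree `T` on `n` vertices and `0 ≤ α < 1`,
`α²(n-1) ≤ E_α(T) ≤ α²(n-1)²`; for `0 < α < 1` the lower bound is attained exactly by
in-trees (every outdegree at most `1`) and the upper bound exactly by out-stars. -/
theorem stmt8 {V : Type*} [Fintype V] [DecidableEq V] (A : Matrix V V ℝ)
    (h01 : ∀ u v, A u v = 0 ∨ A u v = 1) (hloop : ∀ v, A v v = 0)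
    (hnosymm : ∀ u v, A u v = 1 → A v u = 0)
    (htree : (underGraph A).IsTree)
    (n : ℕ) (hn : Fintype.card V = n)
    (α : ℝ) (hα0 : 0 ≤ α) (hα1 : α < 1) :
    (α ^ 2 * ((n : ℝ) - 1) ≤ Ealpha α A ∧ Ealpha α A ≤ α ^ 2 * ((n : ℝ) - 1) ^ 2) ∧
    (0 < α →
      ((Ealpha α A = α ^ 2 * ((n : ℝ) - 1) ↔ ∀ v, outdeg A v ≤ 1) ∧
       (Ealpha α A = α ^ 2 * ((n : ℝ) - 1) ^ 2 ↔
          ∃ c, outdeg A c = (n : ℝ) - 1 ∧ ∀ v, v ≠ c → outdeg A v = 0))) := by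
  classical
  -- natural-number outdegree
  set f : V → ℕ := fun v => (univ.filter (fun w => A v w = 1)).card with hf
  have hd : ∀ v, outdeg A v = (f v : ℝ) := by
    intro v
    show ∑ w, A v w = (((univ.filter (fun w => A v w = 1)).card : ℕ) : ℝ)
    rw [Finset.card_filter]
    push_cast
    apply Finset.sum_congr rfl
    intro w _
    rcases h01 v w with h | h <;> simp [h]
  -- products of off-diagonal/diagonal entries
  have hP : ∀ i j, (Aalpha α A) i j * (Aalpha α A) j i
      = if j = i then α ^ 2 * (outdeg A i) ^ 2 else 0 := by
    intro i j
    by_cases h : j = i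
    · subst h
      simp [Aalpha, Matrix.diagonal, hloop j]
      ring
    · have h' : i ≠ j := fun e => h e.symm
      simp only [Aalpha, Matrix.add_apply, Matrix.smul_apply,
        Matrix.diagonal_apply_ne _ h', Matrix.diagonal_apply_ne _ h, smul_eq_mul,
        mul_zero, zero_add, if_neg h]
      rcases h01 i j with h1 | h1
      · simp [h1]
      · have h2 := hnosymm i j h1
        simp [h2]
  -- trace formula
  have hE : Ealpha α A = α ^ 2 * ∑ v, (outdeg A v) ^ 2 := by
    rw [Ealpha, Matrix.trace, Finset.mul_sum]
    apply Finset.sum_congr rfl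
    intro i _
    rw [Matrix.diag_apply, Matrix.mul_apply]
    rw [Finset.sum_congr rfl (fun j _ => hP i j)]
    simp
  set S1 : ℕ := ∑ v, f v with hS1
  set S2 : ℕ := ∑ v, (f v) ^ 2 with hS2
  have hE2 : Ealpha α A = α ^ 2 * (S2 : ℝ) := by
    rw [hE, hS2]
    push_cast
    congr 1
    exact Finset.sum_congr rfl fun v _ => by rw [hd v]
  -- edge count: S1 = n - 1
  haveI : DecidableRel (underGraph A).Adj := Classical.decRel _
  have hcard : S1 + 1 = n := by
    have hbij : S1 = (underGraph A).edgeFinset.card := by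
      have h1 : S1 = (Finset.univ.filter (fun p : V × V => A p.1 p.2 = 1)).card := by
        rw [hS1, Finset.card_filter]
        rw [Fintype.sum_prod_type]
        apply Finset.sum_congr rfl
        intro v _
        show (univ.filter (fun w => A v w = 1)).card = _
        rw [Finset.card_filter]
      rw [h1]
      apply Finset.card_bij (fun (p : V × V) _ => s(p.1, p.2))
      · intro p hp
        simp only [Finset.mem_filter, Finset.mem_univ, true_and] at hp
        rw [SimpleGraph.mem_edgeFinset]
        have hne : p.1 ≠ p.2 := by
          intro e
          rw [e] at hp
          rw [hloop] at hp
          norm_num at hp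
        exact ⟨hne, Or.inl hp⟩
      · intro p hp q hq hpq
        simp only [Finset.mem_filter, Finset.mem_univ, true_and] at hp hq
        rw [Sym2.eq_iff] at hpq
        rcases hpq with ⟨h1, h2⟩ | ⟨h1, h2⟩
        · exact Prod.ext h1 h2
        · exfalso
          have := hnosymm p.1 p.2 hp
          rw [← h2, ← h1] at hq
          rw [hq] at this
          norm_num at this
      · intro e he
        rw [SimpleGraph.mem_edgeFinset] at he
        induction e with
        | _ u w =>
          obtain ⟨hne, h1 | h1⟩ := he
          · exact ⟨(u, w), by simpa using h1, rfl⟩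
          · exact ⟨(w, u), by simpa using h1, Sym2.eq_swap⟩
    rw [hbij, ← hn]
    exact htree.card_edgeFinset
  have hn1 : (S1 : ℝ) = (n : ℝ) - 1 := by
    have : (S1 : ℝ) + 1 = n := by exact_mod_cast congrArg (Nat.cast : ℕ → ℝ) hcard
    linarith
  -- basic inequalities
  have hle : S1 ≤ S2 := Finset.sum_le_sum fun v _ => Nat.le_self_pow two_ne_zero (f v)
  have hge : S2 ≤ S1 ^ 2 := by
    rw [hS2, sq, Finset.sum_mul]
    apply Finset.sum_le_sum
    intro v _
    rw [sq]
    exact Nat.mul_le_mul_left _ (Finset.single_le_sum (fun _ _ => Nat.zero_le _) (mem_univ v))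
  have hsq : 0 ≤ α ^ 2 := sq_nonneg α
  constructor
  · constructor
    · rw [hE2, ← hn1]
      exact mul_le_mul_of_nonneg_left (by exact_mod_cast hle) hsq
    · rw [hE2, ← hn1]
      have : (S2 : ℝ) ≤ (S1 : ℝ) ^ 2 := by exact_mod_cast hge
      exact mul_le_mul_of_nonneg_left this hsq
  · intro hα
    have hα2 : α ^ 2 ≠ 0 := by positivity
    constructor
    · -- lower equality
      rw [hE2, ← hn1]
      constructor
      · intro h
        have h2 : (S2 : ℝ) = (S1 : ℝ) := mul_left_cancel₀ hα2 h
        have h3 : S2 = S1 := by exact_mod_cast h2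
        have h4 : ∀ v ∈ Finset.univ, f v = (f v) ^ 2 := by
          rw [← Finset.sum_eq_sum_iff_of_le (fun v _ => Nat.le_self_pow two_ne_zero (f v))]
          rw [← hS1, ← hS2, h3]
        intro v
        have := (h4 v (mem_univ v)).symm
        rw [hd]
        have hf1 : f v ≤ 1 := by nlinarith [this]
        exact_mod_cast hf1
      · intro h
        congr 1
        have : ∀ v, f v ≤ 1 := by
          intro v
          have := h v
          rw [hd] at this
          exact_mod_cast this
        rw [hS2, hS1]
        push_cast
        apply Finset.sum_congr rfl
        intro v _
        rcases Nat.le_one_iff_eq_zero_or_eq_one.mp (this v) with h | h <;> simp [h]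
    · -- upper equality
      rw [hE2, ← hn1]
      constructor
      · intro h
        have h2 : (S2 : ℝ) = (S1 : ℝ) ^ 2 := mul_left_cancel₀ hα2 h
        have h3 : S2 = S1 ^ 2 := by exact_mod_cast h2
        by_cases h0 : S1 = 0
        · obtain ⟨c⟩ := htree.isConnected.nonempty
          refine ⟨c, ?_, ?_⟩
          · have : f c = 0 := Nat.le_zero.mp (h0 ▸ Finset.single_le_sum
              (fun _ _ => Nat.zero_le _) (mem_univ c))
            rw [hd, h0, this]
          · intro v _
            rw [hd]
            have : f v = 0 := Nat.le_zero.mp (h0 ▸ Finset.single_le_sum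
              (fun _ _ => Nat.zero_le _) (mem_univ v))
            simp [this]
        · -- some vertex has positive outdegree
          have : ∃ c, 0 < f c := by
            by_contra hc
            push_neg at hc
            exact h0 (by rw [hS1]; exact Finset.sum_eq_zero fun v _ => Nat.le_zero.mp (hc v))
          obtain ⟨c, hc⟩ := this
          have hzero : ∀ v, v ≠ c → f v = 0 := by
            intro v hv
            by_contra hv0
            have hv0 : 0 < f v := Nat.pos_of_ne_zero hv0
            -- strict inequality S2 < S1^2
            have hst : S2 < S1 ^ 2 := by
              rw [hS2, sq, Finset.sum_mul]
              apply Finset.sum_lt_sum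
              · intro w _
                rw [sq]
                exact Nat.mul_le_mul_left _
                  (Finset.single_le_sum (fun _ _ => Nat.zero_le _) (mem_univ w))
              · refine ⟨v, mem_univ v, ?_⟩
                rw [sq]
                refine (Nat.mul_lt_mul_left hv0).mpr ?_
                calc f v < f v + f c := by omega
                  _ ≤ S1 := by
                      rw [hS1]
                      have := Finset.add_sum_erase Finset.univ f (mem_univ v)
                      rw [← this]
                      have hcmem : c ∈ Finset.univ.erase v := by
                        simp [Ne.symm hv]
                      have := Finset.single_le_sum
                        (f := f) (fun _ _ => Nat.zero_le _) hcmem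
                      omega
            omega
          refine ⟨c, ?_, fun v hv => by rw [hd, Nat.cast_eq_zero.mpr (hzero v hv)]⟩
          rw [hd]
          have : S1 = f c := by
            rw [hS1]
            exact Finset.sum_eq_single_of_mem c (mem_univ c) fun v _ hv => hzero v hv
          exact_mod_cast this.symm
      · rintro ⟨c, hc, hrest⟩
        congr 1
        have hfc : (f c : ℝ) = (S1 : ℝ) := by rw [← hd, hc, hn1]
        have hfc' : f c = S1 := by exact_mod_cast hfc
        have hzero : ∀ v, v ≠ c → f v = 0 := by
          intro v hv
          have := hrest v hv
          rw [hd] at this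
          exact_mod_cast this
        have : S2 = f c ^ 2 := by
          rw [hS2]
          exact Finset.sum_eq_single_of_mem c (mem_univ c)
            fun v _ hv => by rw [hzero v hv]; ring
        rw [this, hfc']
        push_cast
        ring
end

section
/- Let G ∈ 𝒢_n^m with strong-component vertex set S, fiber sizes n_s, within-S outdegrees d*(s), and 0 ≤ α < 1. Then E_α(G) ≤ α²·Σ_{s∈S}(d*(s)+n_s−1)² + (1−α)²·c₂(G*) (the right-hand side being E_α(G'), where G' is obtained from G by replacing each hung tree by an out-star with centre s). Moreover, if 0 < α < 1, equality holds if and only if for every s ∈ S every arc of G inside the fiber r⁻¹(s) has tail s, i.e., each hung tree is an out-star with centre s. -/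
open Polynomial Matrix Finset

lemma fiber_arc_count {V : Type*} [Fintype V] [DecidableEq V] (A : Matrix V V ℝ) (r : V → V)
    (s : V) (h01 : ∀ u v, A u v = 0 ∨ A u v = 1) (hloop : ∀ v, A v v = 0)
    (hns : ∀ u v, r u = r v → A u v = 1 → A v u = 0)
    (htree : (fiberGraph A r s).IsTree) :
    ∑ v ∈ univ.filter (fun v => r v = s), ∑ w ∈ univ.filter (fun w => r w = s), A v w
      = (((univ.filter (fun v => r v = s)).card : ℝ)) - 1 := by
  classical
  set F : Finset V := univ.filter (fun v => r v = s) with hF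
  set P : Finset (V × V) := (F ×ˢ F).filter (fun p => A p.1 p.2 = 1) with hP
  have hmem : ∀ p : V × V, p ∈ P → r p.1 = s ∧ r p.2 = s ∧ A p.1 p.2 = 1 := by
    intro p hp
    simp only [hP, hF, Finset.mem_filter, Finset.mem_product, Finset.mem_univ, true_and] at hp
    tauto
  have hsum : ∑ v ∈ F, ∑ w ∈ F, A v w = (P.card : ℝ) := by
    rw [← Finset.sum_product' (s := F) (t := F) (f := fun v w => A v w)]
    rw [← Finset.sum_boole]
    apply Finset.sum_congr rfl
    intro p _
    rcases h01 p.1 p.2 with h | h <;> simp [h]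
  have hcard : P.card = (fiberGraph A r s).edgeFinset.card := by
    refine Finset.card_bij (t := (fiberGraph A r s).edgeFinset) (fun (p : V × V) (hp : p ∈ P) => s((⟨p.1, (hmem p hp).1⟩ : {v : V // r v = s}), (⟨p.2, (hmem p hp).2.1⟩ : {v : V // r v = s}))) ?_ ?_ ?_
    · intro p hp
      rw [SimpleGraph.mem_edgeFinset, SimpleGraph.mem_edgeSet]
      obtain ⟨h1, h2, h3⟩ := hmem p hp
      refine ⟨?_, Or.inl h3⟩
      intro h
      have : p.1 = p.2 := congrArg Subtype.val h
      rw [this, hloop] at h3; norm_num at h3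
    · intro a ha b hb hab
      obtain ⟨ha1, ha2, ha3⟩ := hmem a ha
      obtain ⟨hb1, hb2, hb3⟩ := hmem b hb
      rw [Sym2.eq_iff] at hab
      rcases hab with ⟨h1, h2⟩ | ⟨h1, h2⟩
      · exact Prod.ext (congrArg Subtype.val h1) (congrArg Subtype.val h2)
      · exfalso
        have e1 : a.1 = b.2 := congrArg Subtype.val h1
        have e2 : a.2 = b.1 := congrArg Subtype.val h2
        have := hns b.1 b.2 (hb1.trans hb2.symm) hb3
        rw [← e1, ← e2] at this
        rw [this] at ha3; norm_num at ha3
    · intro e he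
      induction e using Sym2.ind with
      | _ u w =>
        rw [SimpleGraph.mem_edgeFinset, SimpleGraph.mem_edgeSet] at he
        obtain ⟨hne, h | h⟩ := he
        · refine ⟨(u.1, w.1), ?_, ?_⟩
          · simp only [hP, hF, Finset.mem_filter, Finset.mem_product, Finset.mem_univ, true_and]
            exact ⟨⟨u.2, w.2⟩, h⟩
          · congr 1
        · refine ⟨(w.1, u.1), ?_, ?_⟩
          · simp only [hP, hF, Finset.mem_filter, Finset.mem_product, Finset.mem_univ, true_and]
            exact ⟨⟨w.2, u.2⟩, h⟩
          · exact Sym2.eq_swap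
  have htc : (fiberGraph A r s).edgeFinset.card + 1 = Fintype.card {v : V // r v = s} :=
    htree.card_edgeFinset
  have hfc : Fintype.card {v : V // r v = s} = F.card := Fintype.card_subtype _
  rw [hsum, hcard]
  have : (fiberGraph A r s).edgeFinset.card + 1 = F.card := htc.trans hfc
  rw [← this]
  push_cast
  ring

/-- For `G ∈ 𝒢_n^m`, `E_α(G) ≤ α²·Σ_{s∈S}(d*(s)+n_s-1)² + (1-α)²·c₂(G*)`; for `0 < α < 1`
equality holds iff every arc inside a fiber has tail the root of the fiber, i.e. each hung
tree is an out-star with centre its vertex of `S`. -/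
theorem stmt9 {V : Type*} [Fintype V] [DecidableEq V] (A : Matrix V V ℝ) (S : Finset V)
    (r : V → V) (n m : ℕ) (hG : IsGnm A S r n m) (α : ℝ) (hα0 : 0 ≤ α) (hα1 : α < 1) :
    Ealpha α A ≤
        α ^ 2 * ∑ s ∈ S, (dStar A S s + (fibCard r s : ℝ) - 1) ^ 2
          + (1 - α) ^ 2 * c2star A S ∧
    (0 < α →
      (Ealpha α A =
          α ^ 2 * ∑ s ∈ S, (dStar A S s + (fibCard r s : ℝ) - 1) ^ 2
            + (1 - α) ^ 2 * c2star A S ↔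
        ∀ u v, r u = r v → A u v = 1 → u = r u)) := by
  classical
  obtain ⟨h01, hloop, hcV, hcS, h2m, hmn, hstrong, hrmem, hrfix, harc, hnosym, htree⟩ := hG
  have hA0 : ∀ u v, (0:ℝ) ≤ A u v := fun u v => by rcases h01 u v with h | h <;> simp [h]
  set F : V → Finset V := fun s => univ.filter (fun v => r v = s) with hFdef
  set g : V → ℝ := fun v => ∑ w ∈ F (r v), A v w with hgdef
  have hg0 : ∀ v, 0 ≤ g v := fun v => Finset.sum_nonneg fun w _ => hA0 v w
  -- energy formula
  have key : ∀ u v, Aalpha α A u v * Aalpha α A v u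
      = (if u = v then α ^ 2 * (outdeg A u) ^ 2 else 0) + (1 - α) ^ 2 * (A u v * A v u) := by
    intro u v
    by_cases h : u = v
    · subst h
      simp only [Aalpha, Matrix.add_apply, Matrix.smul_apply, Matrix.diagonal_apply_eq,
        smul_eq_mul, hloop u, eq_self_iff_true, if_true]
      ring
    · simp only [Aalpha, Matrix.add_apply, Matrix.smul_apply,
        Matrix.diagonal_apply_ne _ h, Matrix.diagonal_apply_ne' _ h, smul_eq_mul, if_neg h]
      ring
  have hE : Ealpha α A
      = α ^ 2 * ∑ v, (outdeg A v) ^ 2 + (1 - α) ^ 2 * ∑ u, ∑ v, A u v * A v u := by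
    rw [Ealpha]
    simp only [Matrix.trace, Matrix.diag_apply, Matrix.mul_apply]
    calc ∑ i, ∑ j, Aalpha α A i j * Aalpha α A j i
        = ∑ i, ∑ j, ((if i = j then α ^ 2 * (outdeg A i) ^ 2 else 0)
            + (1 - α) ^ 2 * (A i j * A j i)) :=
          Finset.sum_congr rfl fun i _ => Finset.sum_congr rfl fun j _ => key i j
      _ = ∑ i, ((α ^ 2 * (outdeg A i) ^ 2) + ∑ j, (1 - α) ^ 2 * (A i j * A j i)) := by
          apply Finset.sum_congr rfl
          intro i _
          rw [Finset.sum_add_distrib, Finset.sum_ite_eq]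
          simp
      _ = α ^ 2 * ∑ v, (outdeg A v) ^ 2 + (1 - α) ^ 2 * ∑ u, ∑ v, A u v * A v u := by
          rw [Finset.sum_add_distrib, Finset.mul_sum, Finset.mul_sum]
          congr 1
          exact Finset.sum_congr rfl fun i _ => (Finset.mul_sum _ _ _).symm
  -- c2 identification
  have hzero : ∀ u v : V, u ∉ S ∨ v ∉ S → A u v * A v u = 0 := by
    intro u v h
    rcases h01 u v with h1 | h1
    · simp [h1]
    rcases h01 v u with h2 | h2
    · simp [h2]
    rcases harc u v h1 with ⟨hu, hv⟩ | hr
    · tauto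
    · have := hnosym u v hr h1
      rw [this] at h2; norm_num at h2
  have hc2 : ∑ u, ∑ v, A u v * A v u = c2star A S := by
    have step1 : ∑ u, ∑ v, A u v * A v u = ∑ u ∈ S, ∑ v ∈ S, A u v * A v u := by
      rw [← Finset.sum_subset (Finset.subset_univ S)
        (fun u _ hu => Finset.sum_eq_zero fun v _ => hzero u v (Or.inl hu))]
      apply Finset.sum_congr rfl
      intro u hu
      exact (Finset.sum_subset (Finset.subset_univ S)
        (fun v _ hv => hzero u v (Or.inr hv))).symm
    rw [step1, c2star]
    simp only [Matrix.trace, Matrix.diag_apply, Matrix.mul_apply, subm, Matrix.submatrix_apply]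
    rw [Finset.sum_subtype S (fun x => Iff.rfl) (fun u => ∑ v ∈ S, A u v * A v u)]
    apply Finset.sum_congr rfl
    intro u _
    rw [Finset.sum_subtype S (fun x => Iff.rfl) (fun v => A u.1 v * A v u.1)]
  -- degrees
  have hdeg : ∀ v, v ∉ S → outdeg A v = g v := by
    intro v hv
    rw [outdeg, hgdef]
    symm
    apply Finset.sum_subset (Finset.subset_univ _)
    intro w _ hw
    rcases h01 v w with h | h
    · exact h
    · rcases harc v w h with ⟨h1, _⟩ | h2
      · exact absurd h1 hv
      · exact absurd (by simp [hFdef, h2.symm]) hw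
  have hdegS : ∀ s ∈ S, outdeg A s = dStar A S s + g s := by
    intro s hs
    have hrs : r s = s := hrfix s hs
    have hunion : ∑ w ∈ S ∪ F s, A s w = outdeg A s := by
      apply Finset.sum_subset (Finset.subset_univ _)
      intro w _ hw
      rcases h01 s w with h | h
      · exact h
      · rcases harc s w h with ⟨_, h1⟩ | h2
        · exact absurd (Finset.mem_union_left _ h1) hw
        · refine absurd (Finset.mem_union_right _ ?_) hw
          simp [hFdef, ← h2, hrs]
    have hinter : S ∩ F s = {s} := by
      ext w
      simp only [Finset.mem_inter, hFdef, Finset.mem_filter, Finset.mem_univ, true_and,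
        Finset.mem_singleton]
      constructor
      · rintro ⟨hw, hrw⟩
        rw [← hrfix w hw, hrw]
      · rintro rfl
        exact ⟨hs, hrs⟩
    have hui := Finset.sum_union_inter (s₁ := S) (s₂ := F s) (f := fun w => A s w)
    rw [hunion, hinter, Finset.sum_singleton, hloop s, add_zero] at hui
    rw [hui, dStar, hgdef]
    simp [hrs]
  have hgsum : ∀ s ∈ S, ∑ v ∈ F s, g v = (fibCard r s : ℝ) - 1 := by
    intro s hs
    have : ∀ v ∈ F s, g v = ∑ w ∈ F s, A v w := by
      intro v hv
      have hrv : r v = s := by simpa [hFdef] using hv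
      rw [hgdef]; simp only [hrv]
    rw [Finset.sum_congr rfl this]
    exact fiber_arc_count A r s h01 hloop hnosym (htree s hs)
  have hd1 : ∀ s ∈ S, (1:ℝ) ≤ dStar A S s := by
    intro s hs
    have h1S : 1 < S.card := by rw [hcS]; omega
    obtain ⟨t, ht, hts⟩ := Finset.exists_mem_ne h1S s
    rcases (hstrong s hs t ht).cases_head with heq | ⟨b, hb, -⟩
    · exact absurd heq.symm hts
    · calc (1:ℝ) = A s b := hb.2.2.symm
        _ ≤ dStar A S s := Finset.single_le_sum (fun v _ => hA0 s v) hb.2.1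
  -- per-fiber structure
  have hsF : ∀ s ∈ S, s ∈ F s := by
    intro s hs
    simp [hFdef, hrfix s hs]
  have hnotS : ∀ s ∈ S, ∀ v ∈ (F s).erase s, v ∉ S := by
    intro s hs v hv hvS
    have hvF := Finset.mem_of_mem_erase hv
    have hrv : r v = s := by simpa [hFdef] using hvF
    exact Finset.notMem_erase s (F s) (by rwa [← hrfix v hvS, hrv] at hv)
  have hsplit : ∀ s ∈ S, ∑ v ∈ F s, (outdeg A v) ^ 2
      = (dStar A S s + g s) ^ 2 + ∑ v ∈ (F s).erase s, (g v) ^ 2 := by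
    intro s hs
    rw [← Finset.add_sum_erase (F s) _ (hsF s hs), hdegS s hs]
    congr 1
    exact Finset.sum_congr rfl fun v hv => by rw [hdeg v (hnotS s hs v hv)]
  set T : V → ℝ := fun s => ∑ v ∈ (F s).erase s, g v with hTdef
  have hT0 : ∀ s, 0 ≤ T s := fun s => Finset.sum_nonneg fun v _ => hg0 v
  have hTsum : ∀ s ∈ S, g s + T s = (fibCard r s : ℝ) - 1 := by
    intro s hs
    rw [hTdef, Finset.add_sum_erase (F s) g (hsF s hs)]
    exact hgsum s hs
  have hLR : ∀ s ∈ S, ∑ v ∈ F s, (outdeg A v) ^ 2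
      ≤ (dStar A S s + (fibCard r s : ℝ) - 1) ^ 2 := by
    intro s hs
    rw [hsplit s hs]
    have h1 : ∑ v ∈ (F s).erase s, (g v) ^ 2 ≤ (T s) ^ 2 :=
      Finset.sum_sq_le_sq_sum_of_nonneg fun v _ => hg0 v
    have h3 : dStar A S s + g s + T s = dStar A S s + (fibCard r s : ℝ) - 1 := by
      have := hTsum s hs; linarith
    nlinarith [hd1 s hs, hg0 s, hT0 s]
  have hfib : ∑ v, (outdeg A v) ^ 2 = ∑ s ∈ S, ∑ v ∈ F s, (outdeg A v) ^ 2 := by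
    rw [hFdef]
    exact (Finset.sum_fiberwise_of_maps_to (fun v _ => hrmem v) _).symm
  have hEeq : Ealpha α A
      = α ^ 2 * ∑ s ∈ S, ∑ v ∈ F s, (outdeg A v) ^ 2 + (1 - α) ^ 2 * c2star A S := by
    rw [hE, hc2, hfib]
  constructor
  · rw [hEeq]
    have := Finset.sum_le_sum hLR
    nlinarith [sq_nonneg α]
  · intro hαpos
    have hα2 : (0:ℝ) < α ^ 2 := by positivity
    have hiff1 : Ealpha α A
        = α ^ 2 * ∑ s ∈ S, (dStar A S s + (fibCard r s : ℝ) - 1) ^ 2 + (1 - α) ^ 2 * c2star A S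
        ↔ ∑ s ∈ S, ∑ v ∈ F s, (outdeg A v) ^ 2
          = ∑ s ∈ S, (dStar A S s + (fibCard r s : ℝ) - 1) ^ 2 := by
      rw [hEeq]
      constructor
      · intro h
        have h2 : α ^ 2 * ∑ s ∈ S, ∑ v ∈ F s, (outdeg A v) ^ 2
            = α ^ 2 * ∑ s ∈ S, (dStar A S s + (fibCard r s : ℝ) - 1) ^ 2 := by linarith
        exact mul_left_cancel₀ (ne_of_gt hα2) h2
      · intro h; rw [h]
    rw [hiff1, Finset.sum_eq_sum_iff_of_le hLR]
    constructor
    · -- equality per fiber → out-star condition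
      intro heq u v hr huv
      by_contra hne
      set s := r u with hs
      have hsS : s ∈ S := hrmem u
      have huF : u ∈ (F s).erase s := by
        refine Finset.mem_erase.mpr ⟨fun h => hne (h ▸ rfl), ?_⟩
        simp [hFdef, hs]
      have hes := heq s hsS
      rw [hsplit s hsS] at hes
      have h1 : ∑ w ∈ (F s).erase s, (g w) ^ 2 ≤ (T s) ^ 2 :=
        Finset.sum_sq_le_sq_sum_of_nonneg fun w _ => hg0 w
      have h3 : dStar A S s + g s + T s = dStar A S s + (fibCard r s : ℝ) - 1 := by
        have := hTsum s hsS; linarith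
      have hTz : T s = 0 := by nlinarith [hd1 s hsS, hg0 s, hT0 s]
      have hgu : g u = 0 := by
        have hle : g u ≤ T s := Finset.single_le_sum (fun w _ => hg0 w) huF
        have := hg0 u
        linarith
      have hvF : v ∈ F (r u) := by simp [hFdef, ← hr, hs]
      have : (1:ℝ) ≤ g u := by
        rw [hgdef]
        calc (1:ℝ) = A u v := huv.symm
          _ ≤ ∑ w ∈ F (r u), A u w := Finset.single_le_sum (fun w _ => hA0 u w) hvF
      linarith
    · -- out-star condition → equality per fiber
      intro hcond s hs
      have hgz : ∀ v ∈ (F s).erase s, g v = 0 := by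
        intro v hv
        have hvF := Finset.mem_of_mem_erase hv
        have hvs : v ≠ s := Finset.ne_of_mem_erase hv
        have hrv : r v = s := by simpa [hFdef] using hvF
        rw [hgdef]
        apply Finset.sum_eq_zero
        intro w hw
        have hrw : r w = r v := by
          have : r w = r v := by simpa [hFdef, hrv] using hw
          exact this
        rcases h01 v w with h | h
        · exact h
        · exact absurd ((hcond v w hrw.symm h).trans hrv) hvs
      have hTz : T s = 0 := Finset.sum_eq_zero hgz
      have hgs : g s = (fibCard r s : ℝ) - 1 := by
        have := hTsum s hs; linarith
      rw [hsplit s hs, Finset.sum_eq_zero (fun v hv => by rw [hgz v hv]; ring), hgs]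
      ring_nf
end

section
/- Let d₁ ≥ d₂ ≥ ⋯ ≥ d_m ≥ 0 be real numbers and let n₁,…,n_m be positive integers with Σ_{i=1}^m n_i = n. Then Σ_{i=1}^m (d_i+n_i−1)² ≤ (d₁+n−m)² + Σ_{i=2}^m d_i². Equality holds if and only if at most one index i satisfies n_i > 1, and every index i with n_i > 1 satisfies d_i = d₁. (Consequently, for the digraphs G', G'' ∈ 𝒢_n^m with the same strong component, obtained by hanging out-stars of sizes n₁,…,n_m at all vertices, respectively one out-star of size n−m+1 at a vertex of maximal outdegree, one has E_α(G'') ≥ E_α(G') with equality iff G' ≅ G''.) -/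
open Polynomial Matrix Finset

theorem aux_ineq {m : ℕ} (d e : Fin m → ℝ) (i0 : Fin m)
    (hd : ∀ i, d i ≤ d i0) (he : ∀ i, 0 ≤ e i) :
    (∑ i, (d i + e i)^2 ≤ (d i0 + ∑ i, e i)^2 + ∑ i ∈ Finset.univ.erase i0, d i ^2) ∧
    ((∑ i, (d i + e i)^2 = (d i0 + ∑ i, e i)^2 + ∑ i ∈ Finset.univ.erase i0, d i ^2) ↔
      ((∀ i j, 0 < e i → 0 < e j → i = j) ∧ ∀ i, 0 < e i → d i = d i0)) := by
  set S := Finset.univ.erase i0 with hS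
  set A : ℝ := ∑ i ∈ S, e i with hA
  have hsplitE : e i0 + A = ∑ i, e i := Finset.add_sum_erase _ e (Finset.mem_univ i0)
  have hsplitL : ∑ i, (d i + e i)^2 = (d i0 + e i0)^2 + ∑ i ∈ S, (d i + e i)^2 :=
    (Finset.add_sum_erase _ _ (Finset.mem_univ i0)).symm
  have hAe : ∀ i ∈ S, e i ≤ A := fun i hi => Finset.single_le_sum (fun j _ => he j) hi
  set f : Fin m → ℝ := fun i => e i * (2*(d i0 - d i) + (2*e i0 + (A - e i))) with hf
  have hf_nonneg : ∀ i ∈ S, 0 ≤ f i := fun i hi => by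
    have h1 := hd i; have h2 := he i0; have h3 := hAe i hi
    exact mul_nonneg (he i) (by linarith)
  have hiden : (d i0 + ∑ i, e i)^2 + ∑ i ∈ S, d i ^2
      = (∑ i, (d i + e i)^2) + ∑ i ∈ S, f i := by
    rw [hsplitL, ← hsplitE]
    have h1 : ∑ i ∈ S, (d i + e i)^2 = ∑ i ∈ S, (d i^2 + (2*d i*e i + e i^2)) :=
      Finset.sum_congr rfl fun i _ => by ring
    have h2 : ∑ i ∈ S, f i
        = ∑ i ∈ S, (e i * (2*d i0 + 2*e i0 + A) - (2*d i*e i + e i^2)) :=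
      Finset.sum_congr rfl fun i _ => by simp only [hf]; ring
    rw [h1, h2, Finset.sum_add_distrib, Finset.sum_sub_distrib, ← Finset.sum_mul, ← hA]
    ring
  constructor
  · have : 0 ≤ ∑ i ∈ S, f i := Finset.sum_nonneg hf_nonneg
    linarith
  · rw [show (∑ i, (d i + e i)^2 = (d i0 + ∑ i, e i)^2 + ∑ i ∈ S, d i ^2) ↔
        (∑ i ∈ S, f i = 0) from by constructor <;> intro h <;> linarith]
    rw [Finset.sum_eq_zero_iff_of_nonneg hf_nonneg]
    constructor
    · intro h
      have hmain : ∀ i ∈ S, 0 < e i → d i = d i0 ∧ e i0 = 0 ∧ ∀ j ∈ S, j ≠ i → e j = 0 := by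
        intro i hi hei
        have h0 := h i hi
        simp only [hf] at h0
        have hbr : 2*(d i0 - d i) + (2*e i0 + (A - e i)) = 0 := by
          rcases mul_eq_zero.mp h0 with h' | h'
          · exact absurd h' (ne_of_gt hei)
          · exact h'
        have hda := hd i; have hea := he i0; have heb := hAe i hi
        have h1 : d i = d i0 := by linarith
        have h2 : e i0 = 0 := by linarith
        have h3 : A = e i := by linarith
        refine ⟨h1, h2, ?_⟩
        intro j hj hji
        have hsub : e i + ∑ k ∈ S.erase i, e k = A := Finset.add_sum_erase _ e hi
        have hz : ∑ k ∈ S.erase i, e k = 0 := by linarith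
        exact (Finset.sum_eq_zero_iff_of_nonneg (fun k _ => he k)).mp hz j
          (Finset.mem_erase.mpr ⟨hji, hj⟩)
      constructor
      · intro i j hi hj
        by_contra hij
        by_cases hii0 : i = i0
        · have hji0 : j ≠ i0 := fun hh => hij (hii0.trans hh.symm)
          have := (hmain j (Finset.mem_erase.mpr ⟨hji0, Finset.mem_univ j⟩) hj).2.1
          rw [hii0] at hi; linarith
        · have hiS : i ∈ S := Finset.mem_erase.mpr ⟨hii0, Finset.mem_univ i⟩
          obtain ⟨_, h2, h3⟩ := hmain i hiS hi
          by_cases hji0 : j = i0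
          · rw [hji0] at hj; linarith
          · have := h3 j (Finset.mem_erase.mpr ⟨hji0, Finset.mem_univ j⟩) (fun hh => hij hh.symm)
            linarith
      · intro i hi
        by_cases hii : i = i0
        · rw [hii]
        · exact (hmain i (Finset.mem_erase.mpr ⟨hii, Finset.mem_univ i⟩) hi).1
    · rintro ⟨ha, hb⟩ i hi
      simp only [hf]
      by_cases hei : 0 < e i
      · have hiS := Finset.mem_erase.mp hi
        have h1 : d i = d i0 := hb i hei
        have h2 : e i0 = 0 := by
          by_contra h2
          exact hiS.1 (ha i i0 hei (lt_of_le_of_ne (he i0) (Ne.symm h2)))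
        have h3 : A = e i := by
          have hsub : e i + ∑ k ∈ S.erase i, e k = A := Finset.add_sum_erase _ e hi
          have hz : ∑ k ∈ S.erase i, e k = 0 := Finset.sum_eq_zero (by
            intro j hj
            have hjm := Finset.mem_erase.mp hj
            by_contra hz
            exact hjm.1 (ha j i (lt_of_le_of_ne (he j) (Ne.symm hz)) hei))
          linarith
        rw [h1, h2, h3]; ring
      · have hz : e i = 0 := le_antisymm (not_lt.mp hei) (he i)
        rw [hz]; ring

/-- For nonincreasing nonnegative reals `d₁ ≥ ⋯ ≥ d_m ≥ 0` and positive integers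
`n₁,…,n_m` with `Σ nᵢ = n`, one has
`Σᵢ (dᵢ+nᵢ-1)² ≤ (d₁+n-m)² + Σ_{i≥2} dᵢ²`, with equality iff at most one index has
`nᵢ > 1` and every such index satisfies `dᵢ = d₁`. -/
theorem stmt10 (m n : ℕ) (hm : 1 ≤ m) (d : Fin m → ℝ)
    (hnonneg : ∀ i, 0 ≤ d i) (hmono : ∀ i j : Fin m, i ≤ j → d j ≤ d i)
    (nn : Fin m → ℕ) (hpos : ∀ i, 0 < nn i) (hsum : ∑ i, nn i = n) :
    (∑ i, (d i + (nn i : ℝ) - 1) ^ 2 ≤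
        (d ⟨0, by omega⟩ + (n : ℝ) - m) ^ 2 +
          ∑ i ∈ Finset.univ.erase (⟨0, by omega⟩ : Fin m), (d i) ^ 2) ∧
    (∑ i, (d i + (nn i : ℝ) - 1) ^ 2 =
        (d ⟨0, by omega⟩ + (n : ℝ) - m) ^ 2 +
          ∑ i ∈ Finset.univ.erase (⟨0, by omega⟩ : Fin m), (d i) ^ 2 ↔
      (∀ i j, 1 < nn i → 1 < nn j → i = j) ∧
        ∀ i, 1 < nn i → d i = d ⟨0, by omega⟩) := by
  have key := aux_ineq d (fun i => (nn i : ℝ) - 1) ⟨0, by omega⟩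
    (fun i => hmono _ i (Nat.zero_le _))
    (fun i => by
      show (0:ℝ) ≤ (nn i : ℝ) - 1
      have h1 : (1:ℕ) ≤ nn i := hpos i
      have h2 : (1:ℝ) ≤ (nn i : ℝ) := by exact_mod_cast h1
      linarith)
  have hE : ∑ i : Fin m, ((nn i : ℝ) - 1) = (n:ℝ) - m := by
    rw [Finset.sum_sub_distrib, Finset.sum_const, Finset.card_univ, Fintype.card_fin]
    have : ∑ i : Fin m, ((nn i : ℝ)) = (n:ℝ) := by rw [← Nat.cast_sum, hsum]
    rw [this]; ring
  simp only [show ∀ i : Fin m, d i + (nn i:ℝ) - 1 = d i + ((nn i:ℝ) - 1) from fun i => by ring,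
    show ∀ x : ℝ, x + (n:ℝ) - m = x + ∑ i : Fin m, ((nn i:ℝ) - 1) from fun x => by rw [hE]; ring,
    show ∀ i : Fin m, (1 < nn i) ↔ (0 < (nn i:ℝ) - 1) from fun i => by
      rw [sub_pos]; exact (Nat.one_lt_cast).symm]
  exact key
end
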